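/- Let 𝒜 be a reduced gST-automaton and let 𝒜⁺ be the gST-automaton obtained from 𝒜 by adding, for every accepting state p and initial state q with μ(p) ≅ μ(q), a transition from p to q labelled id_{μ(p)}, keeping the same states, initial states and accepting states. Then L(𝒜⁺) = L(𝒜)⁺ = ⋃_{n≥1} L(𝒜)ⁿ. -/

import Mathlib

open scoped Classical

namespace HDA

/-! ### Ipomsets over a fixed alphabet -/

structure PreIpomset (σ : Type) : Type 1 where
  carrier : Type
  fin : Finite carrier
  lt : carrier → carrier → Prop
  evord : carrier → carrier → Prop
  S : Set carrier
  T : Set carrier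
  lab : carrier → σ

namespace PreIpomset

variable {σ : Type}

/-- The precedence order is empty. -/
def Discrete (P : PreIpomset σ) : Prop := ∀ x y, ¬ P.lt x y

/-- Validity: `lt` is a strict partial order which is an interval order, `evord` is acyclic,
for distinct events exactly one of the four relations holds, sources are minimal and
targets are maximal.  (All ipomsets considered are interval.) -/
structure IsIpomset (P : PreIpomset σ) : Prop where
  lt_trans : ∀ x y z, P.lt x y → P.lt y z → P.lt x z
  lt_irrefl : ∀ x, ¬ P.lt x x
  evord_acyclic : ∀ x, ¬ Relation.TransGen P.evord x x
  total : ∀ x y : P.carrier, x ≠ y → P.lt x y ∨ P.lt y x ∨ P.evord x y ∨ P.evord y x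
  lt_not_evord : ∀ x y, P.lt x y → ¬ P.evord x y ∧ ¬ P.evord y x
  src_min : ∀ x ∈ P.S, ∀ y, ¬ P.lt y x
  tgt_max : ∀ x ∈ P.T, ∀ y, ¬ P.lt x y
  interval : ∀ w x y z, P.lt w x → P.lt y z → P.lt w z ∨ P.lt y x

/-- A conclist: a discrete ipomset with empty interfaces. -/
def IsConclist (P : PreIpomset σ) : Prop :=
  P.IsIpomset ∧ P.Discrete ∧ P.S = ∅ ∧ P.T = ∅

/-- A starter `⟨U∖A,U,U⟩`. -/
def IsStarter (P : PreIpomset σ) : Prop := P.IsIpomset ∧ P.Discrete ∧ P.T = Set.univ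

/-- A terminator `⟨U,U,U∖B⟩`. -/
def IsTerminator (P : PreIpomset σ) : Prop := P.IsIpomset ∧ P.Discrete ∧ P.S = Set.univ

/-- An identity `⟨U,U,U⟩`. -/
def IsIdentityIpomset (P : PreIpomset σ) : Prop :=
  P.IsIpomset ∧ P.Discrete ∧ P.S = Set.univ ∧ P.T = Set.univ

def IsProperStarter (P : PreIpomset σ) : Prop := P.IsStarter ∧ P.S ≠ Set.univ

def IsProperTerminator (P : PreIpomset σ) : Prop := P.IsTerminator ∧ P.T ≠ Set.univ

/-- Isomorphism of (pre)ipomsets. -/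
def Iso (P Q : PreIpomset σ) : Prop :=
  ∃ f : P.carrier ≃ Q.carrier,
    (∀ x y, P.lt x y ↔ Q.lt (f x) (f y)) ∧
    (∀ x y, P.evord x y ↔ Q.evord (f x) (f y)) ∧
    (∀ x, x ∈ P.S ↔ f x ∈ Q.S) ∧
    (∀ x, x ∈ P.T ↔ f x ∈ Q.T) ∧
    (∀ x, Q.lab (f x) = P.lab x)

/-- Restriction to a subset of events, with empty interfaces. -/
def restrict (P : PreIpomset σ) (K : Set P.carrier) : PreIpomset σ where
  carrier := {x : P.carrier // x ∈ K}
  fin := by haveI := P.fin; exact inferInstance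
  lt := fun x y => P.lt x.val y.val
  evord := fun x y => P.evord x.val y.val
  S := ∅
  T := ∅
  lab := fun x => P.lab x.val

/-- The source interface of `P` as a conclist. -/
def srcIface (P : PreIpomset σ) : PreIpomset σ := P.restrict P.S

/-- The target interface of `P` as a conclist. -/
def tgtIface (P : PreIpomset σ) : PreIpomset σ := P.restrict P.T

/-- The underlying conclist (forget interfaces). -/
def conclistOf (P : PreIpomset σ) : PreIpomset σ := { P with S := ∅, T := ∅ }

/-- The identity ipomset `⟨U,U,U⟩` on the conclist underlying `P`. -/
def idOf (P : PreIpomset σ) : PreIpomset σ := { P with S := Set.univ, T := Set.univ }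

/-- The discrete ipomset `⟨S,U,T⟩` on the conclist underlying `P`. -/
def withIfaces (P : PreIpomset σ) (S T : Set P.carrier) : PreIpomset σ :=
  { P with S := S, T := T }

/-- The starter `⟨U∖A,U,U⟩` on the conclist underlying `P`. -/
def starter (P : PreIpomset σ) (A : Set P.carrier) : PreIpomset σ :=
  { P with S := Aᶜ, T := Set.univ }

/-- The terminator `⟨U,U,U∖B⟩` on the conclist underlying `P`. -/
def terminator (P : PreIpomset σ) (B : Set P.carrier) : PreIpomset σ :=
  { P with S := Set.univ, T := Bᶜ }

/-- A matching `T_P ≅ S_Q`, i.e. an isomorphism of interface conclists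
along which `P` and `Q` may be glued. -/
structure Matching (P Q : PreIpomset σ) : Type where
  g : {x : P.carrier // x ∈ P.T} ≃ {y : Q.carrier // y ∈ Q.S}
  evord_iff : ∀ x y, P.evord x.val y.val ↔ Q.evord (g x).val (g y).val
  lab_eq : ∀ x, Q.lab (g x).val = P.lab x.val

def gluePOf (P Q : PreIpomset σ) :
    P.carrier ⊕ {y : Q.carrier // y ∉ Q.S} → Option P.carrier
  | Sum.inl x => some x
  | Sum.inr _ => none

noncomputable def glueQOf (P Q : PreIpomset σ) (m : Matching P Q) :
    P.carrier ⊕ {y : Q.carrier // y ∉ Q.S} → Option Q.carrier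
  | Sum.inl x => if h : x ∈ P.T then some (m.g ⟨x, h⟩).val else none
  | Sum.inr y => some y.val

/-- The gluing `P * Q` along a matching `T_P ≅ S_Q`. -/
noncomputable def glue (P Q : PreIpomset σ) (m : Matching P Q) : PreIpomset σ where
  carrier := P.carrier ⊕ {y : Q.carrier // y ∉ Q.S}
  fin := by haveI := P.fin; haveI := Q.fin; exact inferInstance
  lt := fun u v =>
    (∃ x x', gluePOf P Q u = some x ∧ gluePOf P Q v = some x' ∧ P.lt x x') ∨
    (∃ y y', glueQOf P Q m u = some y ∧ glueQOf P Q m v = some y' ∧ Q.lt y y') ∨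
    ((∃ x, gluePOf P Q u = some x ∧ x ∉ P.T) ∧
     (∃ y, glueQOf P Q m v = some y ∧ y ∉ Q.S))
  evord := fun u v =>
    (∃ x x', gluePOf P Q u = some x ∧ gluePOf P Q v = some x' ∧ P.evord x x') ∨
    (∃ y y', glueQOf P Q m u = some y ∧ glueQOf P Q m v = some y' ∧ Q.evord y y')
  S := {u | ∃ x, gluePOf P Q u = some x ∧ x ∈ P.S}
  T := {u | ∃ y, glueQOf P Q m u = some y ∧ y ∈ Q.T}
  lab := Sum.elim P.lab fun y => Q.lab y.val

/-- `R` is (isomorphic to) the gluing `P * Q`; in particular `T_P ≅ S_Q`. -/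
def GlueRel (P Q R : PreIpomset σ) : Prop :=
  ∃ m : Matching P Q, Iso (glue P Q m) R

/-- A choice of gluing (used when a matching is known to exist). -/
noncomputable def glueChoice (P Q : PreIpomset σ) : PreIpomset σ :=
  if h : Nonempty (Matching P Q) then glue P Q h.some else P

/-- `GluesTo l R`: `R` is the gluing of the nonempty list `l` of ipomsets. -/
inductive GluesTo : List (PreIpomset σ) → PreIpomset σ → Prop
  | single {P R : PreIpomset σ} : Iso P R → GluesTo [P] R
  | cons {P : PreIpomset σ} {l : List (PreIpomset σ)} {R' R : PreIpomset σ} :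
      GluesTo l R' → GlueRel P R' R → GluesTo (P :: l) R

/-- Proper starters and proper terminators alternate. -/
def Alternating (l : List (PreIpomset σ)) : Prop :=
  l.Chain' fun P Q => (IsProperStarter P ∧ IsProperTerminator Q) ∨
    (IsProperTerminator P ∧ IsProperStarter Q)

/-- `l` is a sparse step decomposition of `R`: either a single identity, or an
alternating sequence of proper starters and proper terminators gluing to `R`. -/
def IsSparseDecomp (l : List (PreIpomset σ)) (R : PreIpomset σ) : Prop :=
  GluesTo l R ∧
  ((∃ I, l = [I] ∧ IsIdentityIpomset I) ∨
   ((∀ P ∈ l, IsProperStarter P ∨ IsProperTerminator P) ∧ Alternating l))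

/-- `P ∈ iPoms^q`: the sparse step decomposition of `P` does not end with a
proper starter (i.e. it ends with a terminator or is a single identity). -/
def InQ (P : PreIpomset σ) : Prop :=
  ∃ l, IsSparseDecomp l P ∧ ∀ Q, l.getLast? = some Q → ¬ IsProperStarter Q

end PreIpomset

open PreIpomset

variable {σ : Type}

/-! ### Languages and rational operations -/

def glueLang (L M : Set (PreIpomset σ)) : Set (PreIpomset σ) :=
  {R | ∃ P ∈ L, ∃ Q ∈ M, GlueRel P Q R}

def powLang (L : Set (PreIpomset σ)) : ℕ → Set (PreIpomset σ)
  | 0 => L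
  | n + 1 => glueLang L (powLang L n)

/-- `L⁺ = ⋃_{n ≥ 1} Lⁿ`. -/
def plusLang (L : Set (PreIpomset σ)) : Set (PreIpomset σ) := ⋃ n, powLang L n

/-- Rational languages of (interval) ipomsets: generated from `∅` and singletons
(up to isomorphism) of starters and terminators by union, gluing composition and plus. -/
inductive Rational : Set (PreIpomset σ) → Prop
  | empty : Rational ∅
  | single {P : PreIpomset σ} : IsStarter P ∨ IsTerminator P → Rational {Q | Iso Q P}
  | union {L M : Set (PreIpomset σ)} : Rational L → Rational M → Rational (L ∪ M)
  | concat {L M : Set (PreIpomset σ)} : Rational L → Rational M → Rational (glueLang L M)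
  | plus {L : Set (PreIpomset σ)} : Rational L → Rational (plusLang L)

/-! ### P-automata -/

structure PAutomaton (σ : Type) : Type 1 where
  Q : Type
  E : Type
  src : E → Q
  tgt : E → Q
  lab : E → PreIpomset σ
  mu : Q → PreIpomset σ
  start : Set Q
  accept : Set Q

namespace PAutomaton

variable {σ : Type}

/-- The axioms of a P-automaton: finite sets of states and transitions, states
labelled by conclists, transitions by interval ipomsets, with
`μ(s(e)) ≅ S_{λ(e)}` and `μ(t(e)) ≅ T_{λ(e)}`. -/
def IsPA (A : PAutomaton σ) : Prop :=
  Finite A.Q ∧ Finite A.E ∧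
  (∀ q, (A.mu q).IsConclist) ∧ (∀ e, (A.lab e).IsIpomset) ∧
  (∀ e, Iso (A.lab e).srcIface (A.mu (A.src e))) ∧
  (∀ e, Iso (A.lab e).tgtIface (A.mu (A.tgt e)))

/-- ST-automaton: every label is a starter or a terminator. -/
def IsST (A : PAutomaton σ) : Prop := ∀ e, IsStarter (A.lab e) ∨ IsTerminator (A.lab e)

/-- gST-automaton: every label is discrete. -/
def IsGST (A : PAutomaton σ) : Prop := ∀ e, (A.lab e).Discrete

/-- No transition is labelled by an identity. -/
def NoSilent (A : PAutomaton σ) : Prop := ∀ e, ¬ IsIdentityIpomset (A.lab e)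

/-- A reduced gST-automaton: no silent transitions and conditions (a)–(f). -/
def Reduced (A : PAutomaton σ) : Prop :=
  NoSilent A ∧
  (∀ e, A.tgt e ∉ A.start) ∧
  (∀ e, A.src e ∉ A.accept) ∧
  (∀ e, (A.lab e).T = Set.univ → A.tgt e ∈ A.accept) ∧
  (∀ e, (A.lab e).S = Set.univ → A.src e ∈ A.start) ∧
  (∀ e e', A.src e ∈ A.start → A.src e' = A.src e → e' = e) ∧
  (∀ e e', A.tgt e ∈ A.accept → A.tgt e' = A.tgt e → e' = e)

/-- Paths in a P-automaton, from a state to a state. -/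
inductive Path (A : PAutomaton σ) : A.Q → A.Q → Type
  | nil (q : A.Q) : Path A q q
  | cons (e : A.E) {r : A.Q} (rest : Path A (A.tgt e) r) : Path A (A.src e) r

/-- The (interval) ipomset recognized by a path, up to isomorphism:
the gluing of the labels of its transitions (an identity for a constant path). -/
inductive Rec {A : PAutomaton σ} : ∀ {p r : A.Q}, Path A p r → PreIpomset σ → Prop
  | nil (q : A.Q) (R : PreIpomset σ) : Iso (A.mu q).idOf R → Rec (Path.nil q) R
  | cons (e : A.E) {r : A.Q} (rest : Path A (A.tgt e) r) {R' R : PreIpomset σ} :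
      Rec rest R' → GlueRel (A.lab e) R' R → Rec (Path.cons e rest) R

/-- The language of a P-automaton. -/
def lang (A : PAutomaton σ) : Set (PreIpomset σ) :=
  {R | ∃ p r, ∃ α : Path A p r, p ∈ A.start ∧ r ∈ A.accept ∧ Rec α R}

/-- Dimension of a transition. -/
noncomputable def dim (A : PAutomaton σ) (e : A.E) : ℕ := Nat.card (A.lab e).carrier

/-- Number of bad starter transitions of dimension `n`. -/
noncomputable def bst (A : PAutomaton σ) (n : ℕ) : ℕ :=
  Nat.card {e : A.E // IsProperStarter (A.lab e) ∧ A.tgt e ∉ A.accept ∧ A.dim e = n}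

/-- Number of bad terminator transitions of dimension `n`. -/
noncomputable def btt (A : PAutomaton σ) (n : ℕ) : ℕ :=
  Nat.card {e : A.E // IsProperTerminator (A.lab e) ∧ A.src e ∉ A.start ∧ A.dim e = n}

/-- The automaton `𝒜_c`: remove the starter transition `c`; for every transition `e`
out of `t(c)` add a transition `e*` from `s(c)` to `t(e)` labelled `λ(c) * λ(e)`. -/
noncomputable def Ac (A : PAutomaton σ) (c : A.E) : PAutomaton σ where
  Q := A.Q
  E := {e : A.E // e ≠ c} ⊕ {e : A.E // A.src e = A.tgt c}
  src := Sum.elim (fun e => A.src e.val) fun _ => A.src c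
  tgt := Sum.elim (fun e => A.tgt e.val) fun e => A.tgt e.val
  lab := Sum.elim (fun e => A.lab e.val) fun e => glueChoice (A.lab c) (A.lab e.val)
  mu := A.mu
  start := A.start
  accept := A.accept

/-- Disjoint union of two P-automata. -/
def sumAut (A B : PAutomaton σ) : PAutomaton σ where
  Q := A.Q ⊕ B.Q
  E := A.E ⊕ B.E
  src := Sum.elim (Sum.inl ∘ A.src) (Sum.inr ∘ B.src)
  tgt := Sum.elim (Sum.inl ∘ A.tgt) (Sum.inr ∘ B.tgt)
  lab := Sum.elim A.lab B.lab
  mu := Sum.elim A.mu B.mu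
  start := Sum.inl '' A.start ∪ Sum.inr '' B.start
  accept := Sum.inl '' A.accept ∪ Sum.inr '' B.accept

/-- Concatenation `𝒜 * ℬ`: disjoint union together with identity-labelled transitions
from accepting states of `𝒜` to initial states of `ℬ` with isomorphic state labels. -/
def concatAut (A B : PAutomaton σ) : PAutomaton σ where
  Q := A.Q ⊕ B.Q
  E := A.E ⊕ B.E ⊕
    {pq : A.Q × B.Q // pq.1 ∈ A.accept ∧ pq.2 ∈ B.start ∧ Iso (A.mu pq.1) (B.mu pq.2)}
  src := Sum.elim (Sum.inl ∘ A.src)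
    (Sum.elim (Sum.inr ∘ B.src) fun pq => Sum.inl pq.val.1)
  tgt := Sum.elim (Sum.inl ∘ A.tgt)
    (Sum.elim (Sum.inr ∘ B.tgt) fun pq => Sum.inr pq.val.2)
  lab := Sum.elim A.lab (Sum.elim B.lab fun pq => (A.mu pq.val.1).idOf)
  mu := Sum.elim A.mu B.mu
  start := Sum.inl '' A.start
  accept := Sum.inr '' B.accept

/-- Kleene plus `𝒜⁺`: add identity-labelled transitions from accepting states
to initial states with isomorphic state labels. -/
def plusAut (A : PAutomaton σ) : PAutomaton σ where
  Q := A.Q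
  E := A.E ⊕
    {pq : A.Q × A.Q // pq.1 ∈ A.accept ∧ pq.2 ∈ A.start ∧ Iso (A.mu pq.1) (A.mu pq.2)}
  src := Sum.elim A.src fun pq => pq.val.1
  tgt := Sum.elim A.tgt fun pq => pq.val.2
  lab := Sum.elim A.lab fun pq => (A.mu pq.val.1).idOf
  mu := A.mu
  start := A.start
  accept := A.accept

end PAutomaton

/-! ### Partial HDAs -/

/-- `g` exhibits `V` as the sub-conclist of `U` obtained by removing the events in `K`. -/
def IsFaceEmbed (U : PreIpomset σ) (K : Set U.carrier) (V : PreIpomset σ)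
    (g : V.carrier → U.carrier) : Prop :=
  Function.Injective g ∧ Set.range g = Kᶜ ∧
  (∀ u v, V.evord u v ↔ U.evord (g u) (g v)) ∧
  (∀ u, U.lab (g u) = V.lab u)

/-- The data of a partial higher-dimensional automaton: cells labelled by conclists,
partial face maps, initial and accepting cells. -/
structure PrePHDA (σ : Type) : Type 1 where
  cell : Type
  ev : cell → PreIpomset σ
  face : (x : cell) → Set (ev x).carrier → Set (ev x).carrier → Option cell
  start : Set cell
  accept : Set cell

namespace PrePHDA

variable {σ : Type}

/-- The lax precubical identity: whenever `δ_{A,B}(x)` and `δ_{C,D}(δ_{A,B}(x))` are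
defined, `δ_{A∪C,B∪D}(x)` is defined and equal to the composite. -/
def IsLax (X : PrePHDA σ) : Prop :=
  ∀ x (A B : Set (X.ev x).carrier) y, X.face x A B = some y →
    ∀ g, IsFaceEmbed (X.ev x) (A ∪ B) (X.ev y) g →
      ∀ (C D : Set (X.ev y).carrier) z, X.face y C D = some z →
        X.face x (A ∪ g '' C) (B ∪ g '' D) = some z

/-- The axioms of a partial HDA. -/
def IsPHDA (X : PrePHDA σ) : Prop :=
  (∀ x, (X.ev x).IsConclist) ∧
  (∀ x, X.face x ∅ ∅ = some x) ∧
  (∀ x A B y, X.face x A B = some y →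
    Disjoint A B ∧ ∃ g, IsFaceEmbed (X.ev x) (A ∪ B) (X.ev y) g) ∧
  IsLax X

/-- Strictness: `δ_{C,D} ∘ δ_{A,B} = δ_{A∪C,B∪D}` as partial functions. -/
def IsStrict (X : PrePHDA σ) : Prop :=
  IsPHDA X ∧
  (∀ x (A B : Set (X.ev x).carrier) y, X.face x A B = some y →
    ∀ g, IsFaceEmbed (X.ev x) (A ∪ B) (X.ev y) g →
      ∀ C D : Set (X.ev y).carrier,
        X.face x (A ∪ g '' C) (B ∪ g '' D) = X.face y C D) ∧
  (∀ x (A B C D : Set (X.ev x).carrier),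
    Disjoint (A ∪ C) (B ∪ D) → C ∪ D ⊆ (A ∪ B)ᶜ →
    X.face x A B = none → X.face x (A ∪ C) (B ∪ D) = none)

/-- Paths in a partial HDA: sequences of upsteps and downsteps. -/
inductive Path (X : PrePHDA σ) : X.cell → X.cell → Type
  | nil (x : X.cell) : Path X x x
  | up {x z : X.cell} (y : X.cell) (A : Set (X.ev y).carrier)
      (h : X.face y A ∅ = some x) (rest : Path X y z) : Path X x z
  | down {z w : X.cell} (y : X.cell) (B : Set (X.ev y).carrier)
      (h : X.face y ∅ B = some z) (rest : Path X z w) : Path X y w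

/-- Directions of the steps of a path (`true` = upstep). -/
def Path.dirs {X : PrePHDA σ} : {x z : X.cell} → Path X x z → List Bool
  | _, _, .nil _ => []
  | _, _, .up _ _ _ rest => true :: rest.dirs
  | _, _, .down _ _ _ rest => false :: rest.dirs

/-- A path is sparse if upsteps and downsteps alternate. -/
def Path.Sparse {X : PrePHDA σ} {x z : X.cell} (α : Path X x z) : Prop :=
  α.dirs.Chain' (· ≠ ·)

/-- Concatenation of paths. -/
def Path.comp {X : PrePHDA σ} : {x y z : X.cell} → Path X x y → Path X y z → Path X x z
  | _, _, _, .nil _, β => β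
  | _, _, _, .up y A h rest, β => .up y A h (rest.comp β)
  | _, _, _, .down y B h rest, β => .down y B h (rest.comp β)

/-- The ipomset recognized by a path, up to isomorphism: the gluing of the starters
and terminators of its steps (an identity for a constant path). -/
inductive Rec {X : PrePHDA σ} : ∀ {x z : X.cell}, Path X x z → PreIpomset σ → Prop
  | nil (x : X.cell) (R : PreIpomset σ) :
      Iso (X.ev x).idOf R → Rec (Path.nil x) R
  | up {x z : X.cell} (y : X.cell) (A : Set (X.ev y).carrier)
      (h : X.face y A ∅ = some x) (rest : Path X y z) {R' R : PreIpomset σ} :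
      Rec rest R' → GlueRel ((X.ev y).starter A) R' R → Rec (Path.up y A h rest) R
  | down {z w : X.cell} (y : X.cell) (B : Set (X.ev y).carrier)
      (h : X.face y ∅ B = some z) (rest : Path X z w) {R' R : PreIpomset σ} :
      Rec rest R' → GlueRel ((X.ev y).terminator B) R' R → Rec (Path.down y B h rest) R

/-- The language of a partial HDA. -/
def lang (X : PrePHDA σ) : Set (PreIpomset σ) :=
  {R | ∃ x z, ∃ α : Path X x z, x ∈ X.start ∧ z ∈ X.accept ∧ Rec α R}

/-- `X(K,P)`: cells reachable from `K` by a path recognizing `P`. -/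
def track (X : PrePHDA σ) (K : Set X.cell) (P : PreIpomset σ) : Set X.cell :=
  {x | ∃ s, ∃ α : Path X s x, s ∈ K ∧ Rec α P}

/-- Deterministic partial HDA: at most one initial cell per conclist, and lower
face maps are "injective" in the appropriate sense. -/
def Deterministic (X : PrePHDA σ) : Prop :=
  (∀ x y, x ∈ X.start → y ∈ X.start → Iso (X.ev x) (X.ev y) → x = y) ∧
  (∀ (y y' : X.cell) (A : Set (X.ev y).carrier) (A' : Set (X.ev y').carrier)
      (x : X.cell), X.face y A ∅ = some x → X.face y' A' ∅ = some x →
    (∃ f : (X.ev y).carrier ≃ (X.ev y').carrier,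
      (∀ u v, (X.ev y).evord u v ↔ (X.ev y').evord (f u) (f v)) ∧
      (∀ u, (X.ev y').lab (f u) = (X.ev y).lab u) ∧ f '' A = A') → y = y')

end PrePHDA

/-! ### Relational HDAs -/

/-- The data of a relational HDA: face relations instead of partial face maps. -/
structure PreRHDA (σ : Type) : Type 1 where
  cell : Type
  ev : cell → PreIpomset σ
  face : (x : cell) → Set (ev x).carrier → Set (ev x).carrier → Set cell
  start : Set cell
  accept : Set cell

namespace PreRHDA

variable {σ : Type}

/-- The axioms of a relational HDA, with the lax precubical identity
`δ_{C,D} ∘ δ_{A,B} ⊆ δ_{A∪C,B∪D}`. -/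
def IsRHDA (X : PreRHDA σ) : Prop :=
  (∀ x, (X.ev x).IsConclist) ∧
  (∀ x, X.face x ∅ ∅ = {x}) ∧
  (∀ x A B y, y ∈ X.face x A B →
    Disjoint A B ∧ ∃ g, IsFaceEmbed (X.ev x) (A ∪ B) (X.ev y) g) ∧
  (∀ x (A B : Set (X.ev x).carrier) y, y ∈ X.face x A B →
    ∀ g, IsFaceEmbed (X.ev x) (A ∪ B) (X.ev y) g →
      ∀ (C D : Set (X.ev y).carrier) z, z ∈ X.face y C D →
        z ∈ X.face x (A ∪ g '' C) (B ∪ g '' D))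

/-- Paths in a relational HDA. -/
inductive Path (X : PreRHDA σ) : X.cell → X.cell → Type 1
  | nil (x : X.cell) : Path X x x
  | up {x z : X.cell} (y : X.cell) (A : Set (X.ev y).carrier)
      (h : x ∈ X.face y A ∅) (rest : Path X y z) : Path X x z
  | down {z w : X.cell} (y : X.cell) (B : Set (X.ev y).carrier)
      (h : z ∈ X.face y ∅ B) (rest : Path X z w) : Path X y w

/-- The ipomset recognized by a path in a relational HDA. -/
inductive Rec {X : PreRHDA σ} : ∀ {x z : X.cell}, Path X x z → PreIpomset σ → Prop
  | nil (x : X.cell) (R : PreIpomset σ) :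
      Iso (X.ev x).idOf R → Rec (Path.nil x) R
  | up {x z : X.cell} (y : X.cell) (A : Set (X.ev y).carrier)
      (h : x ∈ X.face y A ∅) (rest : Path X y z) {R' R : PreIpomset σ} :
      Rec rest R' → GlueRel ((X.ev y).starter A) R' R → Rec (Path.up y A h rest) R
  | down {z w : X.cell} (y : X.cell) (B : Set (X.ev y).carrier)
      (h : z ∈ X.face y ∅ B) (rest : Path X z w) {R' R : PreIpomset σ} :
      Rec rest R' → GlueRel ((X.ev y).terminator B) R' R → Rec (Path.down y B h rest) R

/-- The language of a relational HDA. -/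
def lang (X : PreRHDA σ) : Set (PreIpomset σ) :=
  {R | ∃ x z, ∃ α : Path X x z, x ∈ X.start ∧ z ∈ X.accept ∧ Rec α R}

/-- The ST-automaton `ST(X)` of a relational HDA `X`: states are cells, transitions
mimic the starting and terminating of events. -/
def stAut (X : PreRHDA σ) : PAutomaton σ where
  Q := X.cell
  E := (Σ q : X.cell, Σ A : Set (X.ev q).carrier, {p : X.cell // p ∈ X.face q A ∅}) ⊕
       (Σ q : X.cell, Σ B : Set (X.ev q).carrier, {r : X.cell // r ∈ X.face q ∅ B})
  src := Sum.elim (fun t => t.2.2.val) fun t => t.1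
  tgt := Sum.elim (fun t => t.1) fun t => t.2.2.val
  lab := Sum.elim (fun t => (X.ev t.1).starter t.2.1) fun t => (X.ev t.1).terminator t.2.1
  mu := X.ev
  start := X.start
  accept := X.accept

end PreRHDA

/-! ### The partial HDA of a reduced gST-automaton -/

open PAutomaton

/-- The cell representing a state `q` in `X(𝒜)`: `q` is merged with a terminator
transition out of it or a starter transition into it, if such exists. -/
noncomputable def cellOfState (A : PAutomaton σ) (q : A.Q) : A.E ⊕ A.Q :=
  if h : ∃ e, IsTerminator (A.lab e) ∧ A.src e = q then Sum.inl h.choose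
  else if h' : ∃ e, IsStarter (A.lab e) ∧ A.tgt e = q then Sum.inl h'.choose
  else Sum.inr q

/-- `X(𝒜)`: cells are `(Q ⊔ E)/∼`, with the only defined (nontrivial) face maps
`δ⁰_{U∖S}([e]) = [s(e)]` and `δ¹_{U∖T}([e]) = [t(e)]` for `λ(e) = ⟨S,U,T⟩`. -/
noncomputable def XofA (A : PAutomaton σ) : PrePHDA σ where
  cell := A.E ⊕ A.Q
  ev := Sum.elim (fun e => (A.lab e).conclistOf) A.mu
  face := fun x =>
    match x with
    | Sum.inl e => fun As Bs =>
        if As = ∅ ∧ Bs = ∅ then some (Sum.inl e)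
        else if As = (A.lab e).Sᶜ ∧ Bs = ∅ then some (cellOfState A (A.src e))
        else if As = ∅ ∧ Bs = (A.lab e).Tᶜ then some (cellOfState A (A.tgt e))
        else none
    | Sum.inr q => fun As Bs =>
        if As = ∅ ∧ Bs = ∅ then some (Sum.inr q) else none
  start := cellOfState A '' A.start
  accept := cellOfState A '' A.accept

end HDA

namespace HDA

namespace PreIpomset

variable {σ : Type}

/-! #### Iso is an equivalence -/

lemma Iso.refl (P : PreIpomset σ) : Iso P P :=
  ⟨Equiv.refl _, fun _ _ => Iff.rfl, fun _ _ => Iff.rfl, fun _ => Iff.rfl,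
    fun _ => Iff.rfl, fun _ => rfl⟩

lemma Iso.symm {P Q : PreIpomset σ} (h : Iso P Q) : Iso Q P := by
  obtain ⟨f, h1, h2, h3, h4, h5⟩ := h
  refine ⟨f.symm, ?_, ?_, ?_, ?_, ?_⟩
  · intro x y; rw [h1]; simp
  · intro x y; rw [h2]; simp
  · intro x; rw [h3]; simp
  · intro x; rw [h4]; simp
  · intro x; rw [← h5 (f.symm x)]; simp

lemma Iso.trans {P Q R : PreIpomset σ} (h : Iso P Q) (h' : Iso Q R) : Iso P R := by
  obtain ⟨f, h1, h2, h3, h4, h5⟩ := h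
  obtain ⟨g, g1, g2, g3, g4, g5⟩ := h'
  exact ⟨f.trans g, fun x y => (h1 x y).trans (g1 _ _),
    fun x y => (h2 x y).trans (g2 _ _), fun x => (h3 x).trans (g3 _),
    fun x => (h4 x).trans (g4 _), fun x => (g5 (f x)).trans (h5 x)⟩

lemma Discrete.of_iso {P Q : PreIpomset σ} (h : Iso P Q) (hQ : Q.Discrete) : P.Discrete := by
  obtain ⟨f, h1, -⟩ := h
  intro x y hxy
  exact hQ _ _ ((h1 x y).mp hxy)

/-! #### Characterization of the gluing -/

section GlueChar

variable {P Q : PreIpomset σ} (m : Matching P Q)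

lemma gluePOf_inl (x : P.carrier) : gluePOf P Q (Sum.inl x) = some x := rfl

lemma gluePOf_inr (y : {y : Q.carrier // y ∉ Q.S}) : gluePOf P Q (Sum.inr y) = none := rfl

lemma gluePOf_eq_some {u : P.carrier ⊕ {y : Q.carrier // y ∉ Q.S}} {x : P.carrier}
    (h : gluePOf P Q u = some x) : u = Sum.inl x := by
  cases u with
  | inl x' => simp [gluePOf] at h; rw [h]
  | inr y => simp [gluePOf] at h

lemma glueQOf_inl {x : P.carrier} (h : x ∈ P.T) :
    glueQOf P Q m (Sum.inl x) = some (m.g ⟨x, h⟩).val := by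
  simp [glueQOf, h]

lemma glueQOf_inl_not {x : P.carrier} (h : x ∉ P.T) :
    glueQOf P Q m (Sum.inl x) = none := by
  simp [glueQOf, h]

lemma glueQOf_inr (y : {y : Q.carrier // y ∉ Q.S}) :
    glueQOf P Q m (Sum.inr y) = some y.val := rfl

lemma glueQOf_inl_eq_some {x : P.carrier} {y : Q.carrier}
    (h : glueQOf P Q m (Sum.inl x) = some y) :
    ∃ hx : x ∈ P.T, y = (m.g ⟨x, hx⟩).val := by
  by_cases hx : x ∈ P.T
  · rw [glueQOf_inl m hx] at h
    exact ⟨hx, (Option.some.inj h).symm⟩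
  · rw [glueQOf_inl_not m hx] at h; simp at h

lemma glue_lt_inl_inl (x x' : P.carrier) :
    (glue P Q m).lt (Sum.inl x) (Sum.inl x') ↔
      P.lt x x' ∨ ∃ (h : x ∈ P.T) (h' : x' ∈ P.T),
        Q.lt (m.g ⟨x, h⟩).val (m.g ⟨x', h'⟩).val := by
  constructor
  · rintro (⟨a, b, ha, hb, hab⟩ | ⟨y, y', hy, hy', hyy⟩ | ⟨⟨a, ha, -⟩, ⟨y, hy, hyS⟩⟩)
    · cases Option.some.inj ha; cases Option.some.inj hb; exact Or.inl hab
    · obtain ⟨hx, rfl⟩ := glueQOf_inl_eq_some m hy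
      obtain ⟨hx', rfl⟩ := glueQOf_inl_eq_some m hy'
      exact Or.inr ⟨hx, hx', hyy⟩
    · obtain ⟨hx', rfl⟩ := glueQOf_inl_eq_some m hy
      exact absurd (m.g ⟨x', hx'⟩).property hyS
  · rintro (h | ⟨h, h', hq⟩)
    · exact Or.inl ⟨x, x', rfl, rfl, h⟩
    · exact Or.inr (Or.inl ⟨_, _, glueQOf_inl m h, glueQOf_inl m h', hq⟩)

lemma glue_lt_inl_inr (x : P.carrier) (y : {y : Q.carrier // y ∉ Q.S}) :
    (glue P Q m).lt (Sum.inl x) (Sum.inr y) ↔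
      x ∉ P.T ∨ ∃ h : x ∈ P.T, Q.lt (m.g ⟨x, h⟩).val y.val := by
  constructor
  · rintro (⟨a, b, ha, hb, hab⟩ | ⟨y0, y', hy, hy', hyy⟩ | ⟨⟨a, ha, haT⟩, -⟩)
    · simp [gluePOf] at hb
    · obtain ⟨hx, rfl⟩ := glueQOf_inl_eq_some m hy
      cases Option.some.inj hy'
      exact Or.inr ⟨hx, hyy⟩
    · cases Option.some.inj ha; exact Or.inl haT
  · rintro (h | ⟨h, hq⟩)
    · exact Or.inr (Or.inr ⟨⟨x, rfl, h⟩, ⟨y.val, rfl, y.property⟩⟩)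
    · exact Or.inr (Or.inl ⟨_, _, glueQOf_inl m h, rfl, hq⟩)

lemma glue_lt_inr_inl (y : {y : Q.carrier // y ∉ Q.S}) (x : P.carrier) :
    (glue P Q m).lt (Sum.inr y) (Sum.inl x) ↔
      ∃ h : x ∈ P.T, Q.lt y.val (m.g ⟨x, h⟩).val := by
  constructor
  · rintro (⟨a, b, ha, hb, hab⟩ | ⟨y0, y', hy, hy', hyy⟩ | ⟨⟨a, ha, -⟩, -⟩)
    · simp [gluePOf] at ha
    · cases Option.some.inj hy
      obtain ⟨hx, rfl⟩ := glueQOf_inl_eq_some m hy'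
      exact ⟨hx, hyy⟩
    · simp [gluePOf] at ha
  · rintro ⟨h, hq⟩
    exact Or.inr (Or.inl ⟨_, _, rfl, glueQOf_inl m h, hq⟩)

lemma glue_lt_inr_inr (y y' : {y : Q.carrier // y ∉ Q.S}) :
    (glue P Q m).lt (Sum.inr y) (Sum.inr y') ↔ Q.lt y.val y'.val := by
  constructor
  · rintro (⟨a, b, ha, hb, hab⟩ | ⟨y0, y1, hy, hy', hyy⟩ | ⟨⟨a, ha, -⟩, -⟩)
    · simp [gluePOf] at ha
    · cases Option.some.inj hy; cases Option.some.inj hy'; exact hyy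
    · simp [gluePOf] at ha
  · intro h
    exact Or.inr (Or.inl ⟨_, _, rfl, rfl, h⟩)

lemma glue_evord_inl_inl (x x' : P.carrier) :
    (glue P Q m).evord (Sum.inl x) (Sum.inl x') ↔ P.evord x x' := by
  constructor
  · rintro (⟨a, b, ha, hb, hab⟩ | ⟨y, y', hy, hy', hyy⟩)
    · cases Option.some.inj ha; cases Option.some.inj hb; exact hab
    · obtain ⟨hx, rfl⟩ := glueQOf_inl_eq_some m hy
      obtain ⟨hx', rfl⟩ := glueQOf_inl_eq_some m hy'
      exact (m.evord_iff ⟨x, hx⟩ ⟨x', hx'⟩).mpr hyy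
  · intro h; exact Or.inl ⟨x, x', rfl, rfl, h⟩

lemma glue_evord_inl_inr (x : P.carrier) (y : {y : Q.carrier // y ∉ Q.S}) :
    (glue P Q m).evord (Sum.inl x) (Sum.inr y) ↔
      ∃ h : x ∈ P.T, Q.evord (m.g ⟨x, h⟩).val y.val := by
  constructor
  · rintro (⟨a, b, ha, hb, hab⟩ | ⟨y0, y', hy, hy', hyy⟩)
    · simp [gluePOf] at hb
    · obtain ⟨hx, rfl⟩ := glueQOf_inl_eq_some m hy
      cases Option.some.inj hy'
      exact ⟨hx, hyy⟩
  · rintro ⟨h, hq⟩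
    exact Or.inr ⟨_, _, glueQOf_inl m h, rfl, hq⟩

lemma glue_evord_inr_inl (y : {y : Q.carrier // y ∉ Q.S}) (x : P.carrier) :
    (glue P Q m).evord (Sum.inr y) (Sum.inl x) ↔
      ∃ h : x ∈ P.T, Q.evord y.val (m.g ⟨x, h⟩).val := by
  constructor
  · rintro (⟨a, b, ha, hb, hab⟩ | ⟨y0, y', hy, hy', hyy⟩)
    · simp [gluePOf] at ha
    · cases Option.some.inj hy
      obtain ⟨hx, rfl⟩ := glueQOf_inl_eq_some m hy'
      exact ⟨hx, hyy⟩
  · rintro ⟨h, hq⟩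
    exact Or.inr ⟨_, _, rfl, glueQOf_inl m h, hq⟩

lemma glue_evord_inr_inr (y y' : {y : Q.carrier // y ∉ Q.S}) :
    (glue P Q m).evord (Sum.inr y) (Sum.inr y') ↔ Q.evord y.val y'.val := by
  constructor
  · rintro (⟨a, b, ha, hb, hab⟩ | ⟨y0, y1, hy, hy', hyy⟩)
    · simp [gluePOf] at ha
    · cases Option.some.inj hy; cases Option.some.inj hy'; exact hyy
  · intro h; exact Or.inr ⟨_, _, rfl, rfl, h⟩

lemma glue_S_inl (x : P.carrier) :
    Sum.inl x ∈ (glue P Q m).S ↔ x ∈ P.S := by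
  constructor
  · rintro ⟨a, ha, haS⟩; cases Option.some.inj ha; exact haS
  · intro h; exact ⟨x, rfl, h⟩

lemma glue_S_inr (y : {y : Q.carrier // y ∉ Q.S}) :
    Sum.inr y ∉ (glue P Q m).S := by
  rintro ⟨a, ha, -⟩; simp [gluePOf] at ha

lemma glue_T_inl (x : P.carrier) :
    Sum.inl x ∈ (glue P Q m).T ↔ ∃ h : x ∈ P.T, (m.g ⟨x, h⟩).val ∈ Q.T := by
  constructor
  · rintro ⟨y, hy, hyT⟩
    obtain ⟨hx, rfl⟩ := glueQOf_inl_eq_some m hy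
    exact ⟨hx, hyT⟩
  · rintro ⟨h, hq⟩; exact ⟨_, glueQOf_inl m h, hq⟩

lemma glue_T_inr (y : {y : Q.carrier // y ∉ Q.S}) :
    Sum.inr y ∈ (glue P Q m).T ↔ y.val ∈ Q.T := by
  constructor
  · rintro ⟨y0, hy, hyT⟩; cases Option.some.inj hy; exact hyT
  · intro h; exact ⟨y.val, rfl, h⟩

lemma glue_lab_inl (x : P.carrier) : (glue P Q m).lab (Sum.inl x) = P.lab x := rfl

lemma glue_lab_inr (y : {y : Q.carrier // y ∉ Q.S}) :
    (glue P Q m).lab (Sum.inr y) = Q.lab y.val := rfl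

end GlueChar

end PreIpomset

namespace PreIpomset

variable {σ : Type}

/-! #### Congruence of `GlueRel` -/

lemma GlueRel.iso_right {P Q R R' : PreIpomset σ} (h : GlueRel P Q R) (hi : Iso R R') :
    GlueRel P Q R' := by
  obtain ⟨m, hm⟩ := h
  exact ⟨m, hm.trans hi⟩

lemma GlueRel.congr_left {P' P Q R : PreIpomset σ} (hi : Iso P' P) (h : GlueRel P Q R) :
    GlueRel P' Q R := by
  obtain ⟨m, hm⟩ := h
  obtain ⟨f, f1, f2, f3, f4, f5⟩ := hi
  let fT : {x : P'.carrier // x ∈ P'.T} ≃ {x : P.carrier // x ∈ P.T} :=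
    Equiv.subtypeEquiv f f4
  have hfT : ∀ (x : P'.carrier) (h : x ∈ P'.T), (fT ⟨x, h⟩).val = f x := fun _ _ => rfl
  refine ⟨⟨(fT.trans m.g), ?_, ?_⟩, Iso.trans ?_ hm⟩
  · intro x y
    exact (f2 x.val y.val).trans (m.evord_iff (fT x) (fT y))
  · intro x
    exact (m.lab_eq (fT x)).trans (f5 x.val)
  · refine ⟨Equiv.sumCongr f (Equiv.refl _), ?_, ?_, ?_, ?_, ?_⟩
    · rintro (x | y) (x' | y')
      · show _ ↔ (glue P Q m).lt (Sum.inl (f x)) (Sum.inl (f x'))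
        rw [glue_lt_inl_inl, glue_lt_inl_inl]
        constructor
        · rintro (h | ⟨h, h', hq⟩)
          · exact Or.inl ((f1 _ _).mp h)
          · exact Or.inr ⟨(f4 x).mp h, (f4 x').mp h', hq⟩
        · rintro (h | ⟨h, h', hq⟩)
          · exact Or.inl ((f1 _ _).mpr h)
          · exact Or.inr ⟨(f4 x).mpr h, (f4 x').mpr h', hq⟩
      · show _ ↔ (glue P Q m).lt (Sum.inl (f x)) (Sum.inr y')
        rw [glue_lt_inl_inr, glue_lt_inl_inr]
        constructor
        · rintro (h | ⟨h, hq⟩)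
          · exact Or.inl (fun hc => h ((f4 x).mpr hc))
          · exact Or.inr ⟨(f4 x).mp h, hq⟩
        · rintro (h | ⟨h, hq⟩)
          · exact Or.inl (fun hc => h ((f4 x).mp hc))
          · exact Or.inr ⟨(f4 x).mpr h, hq⟩
      · show _ ↔ (glue P Q m).lt (Sum.inr y) (Sum.inl (f x'))
        rw [glue_lt_inr_inl, glue_lt_inr_inl]
        constructor
        · rintro ⟨h, hq⟩; exact ⟨(f4 x').mp h, hq⟩
        · rintro ⟨h, hq⟩; exact ⟨(f4 x').mpr h, hq⟩
      · show _ ↔ (glue P Q m).lt (Sum.inr y) (Sum.inr y')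
        rw [glue_lt_inr_inr, glue_lt_inr_inr]
    · rintro (x | y) (x' | y')
      · show _ ↔ (glue P Q m).evord (Sum.inl (f x)) (Sum.inl (f x'))
        rw [glue_evord_inl_inl, glue_evord_inl_inl]
        exact f2 x x'
      · show _ ↔ (glue P Q m).evord (Sum.inl (f x)) (Sum.inr y')
        rw [glue_evord_inl_inr, glue_evord_inl_inr]
        constructor
        · rintro ⟨h, hq⟩; exact ⟨(f4 x).mp h, hq⟩
        · rintro ⟨h, hq⟩; exact ⟨(f4 x).mpr h, hq⟩
      · show _ ↔ (glue P Q m).evord (Sum.inr y) (Sum.inl (f x'))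
        rw [glue_evord_inr_inl, glue_evord_inr_inl]
        constructor
        · rintro ⟨h, hq⟩; exact ⟨(f4 x').mp h, hq⟩
        · rintro ⟨h, hq⟩; exact ⟨(f4 x').mpr h, hq⟩
      · show _ ↔ (glue P Q m).evord (Sum.inr y) (Sum.inr y')
        rw [glue_evord_inr_inr, glue_evord_inr_inr]
    · rintro (x | y)
      · show _ ↔ Sum.inl (f x) ∈ (glue P Q m).S
        erw [glue_S_inl, glue_S_inl]
        exact f3 x
      · show _ ↔ Sum.inr y ∈ (glue P Q m).S
        constructor
        · intro h; exact absurd h (glue_S_inr _ y)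
        · intro h; exact absurd h (glue_S_inr m y)
    · rintro (x | y)
      · show _ ↔ Sum.inl (f x) ∈ (glue P Q m).T
        erw [glue_T_inl, glue_T_inl]
        constructor
        · rintro ⟨h, hq⟩; exact ⟨(f4 x).mp h, hq⟩
        · rintro ⟨h, hq⟩; exact ⟨(f4 x).mpr h, hq⟩
      · show _ ↔ Sum.inr y ∈ (glue P Q m).T
        erw [glue_T_inr]
    · rintro (x | y)
      · show (glue P Q m).lab (Sum.inl (f x)) = _
        rw [glue_lab_inl, glue_lab_inl]
        exact f5 x
      · rfl

lemma GlueRel.congr_right {P Q' Q R : PreIpomset σ} (hi : Iso Q' Q) (h : GlueRel P Q R) :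
    GlueRel P Q' R := by
  obtain ⟨m, hm⟩ := h
  obtain ⟨f, f1, f2, f3, f4, f5⟩ := hi
  let fS : {y : Q'.carrier // y ∈ Q'.S} ≃ {y : Q.carrier // y ∈ Q.S} :=
    Equiv.subtypeEquiv f f3
  have key : ∀ (x : P.carrier) (h : x ∈ P.T),
      f ((m.g.trans fS.symm) ⟨x, h⟩).val = (m.g ⟨x, h⟩).val := by
    intro x h
    have : (fS (fS.symm (m.g ⟨x, h⟩))).val = (m.g ⟨x, h⟩).val := by
      rw [Equiv.apply_symm_apply]
    exact this
  refine ⟨⟨m.g.trans fS.symm, ?_, ?_⟩, Iso.trans ?_ hm⟩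
  · intro x y
    refine (m.evord_iff x y).trans ?_
    rw [f2, key _ x.2, key _ y.2]
  · intro x
    rw [← m.lab_eq x, ← key _ x.2, f5]
  · refine ⟨Equiv.sumCongr (Equiv.refl _)
      (Equiv.subtypeEquiv f (fun y => not_congr (f3 y))), ?_, ?_, ?_, ?_, ?_⟩
    · rintro (x | y) (x' | y')
      · show _ ↔ (glue P Q m).lt (Sum.inl x) (Sum.inl x')
        rw [glue_lt_inl_inl, glue_lt_inl_inl]
        constructor
        · rintro (h | ⟨h, h', hq⟩)
          · exact Or.inl h
          · exact Or.inr ⟨h, h', by rw [← key x h, ← key x' h']; exact (f1 _ _).mp hq⟩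
        · rintro (h | ⟨h, h', hq⟩)
          · exact Or.inl h
          · exact Or.inr ⟨h, h', (f1 _ _).mpr (by rwa [key x h, key x' h'])⟩
      · show _ ↔ (glue P Q m).lt (Sum.inl x) (Sum.inr ⟨f y'.val, _⟩)
        rw [glue_lt_inl_inr, glue_lt_inl_inr]
        constructor
        · rintro (h | ⟨h, hq⟩)
          · exact Or.inl h
          · exact Or.inr ⟨h, by rw [← key x h]; exact (f1 _ _).mp hq⟩
        · rintro (h | ⟨h, hq⟩)
          · exact Or.inl h
          · exact Or.inr ⟨h, (f1 _ _).mpr (by rwa [key x h])⟩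
      · show _ ↔ (glue P Q m).lt (Sum.inr ⟨f y.val, _⟩) (Sum.inl x')
        rw [glue_lt_inr_inl, glue_lt_inr_inl]
        constructor
        · rintro ⟨h, hq⟩
          exact ⟨h, by rw [← key x' h]; exact (f1 _ _).mp hq⟩
        · rintro ⟨h, hq⟩
          exact ⟨h, (f1 _ _).mpr (by rwa [key x' h])⟩
      · show _ ↔ (glue P Q m).lt (Sum.inr ⟨f y.val, _⟩) (Sum.inr ⟨f y'.val, _⟩)
        rw [glue_lt_inr_inr, glue_lt_inr_inr]
        exact f1 y.val y'.val
    · rintro (x | y) (x' | y')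
      · show _ ↔ (glue P Q m).evord (Sum.inl x) (Sum.inl x')
        rw [glue_evord_inl_inl, glue_evord_inl_inl]
      · show _ ↔ (glue P Q m).evord (Sum.inl x) (Sum.inr ⟨f y'.val, _⟩)
        rw [glue_evord_inl_inr, glue_evord_inl_inr]
        constructor
        · rintro ⟨h, hq⟩
          exact ⟨h, by rw [← key x h]; exact (f2 _ _).mp hq⟩
        · rintro ⟨h, hq⟩
          exact ⟨h, (f2 _ _).mpr (by rwa [key x h])⟩
      · show _ ↔ (glue P Q m).evord (Sum.inr ⟨f y.val, _⟩) (Sum.inl x')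
        rw [glue_evord_inr_inl, glue_evord_inr_inl]
        constructor
        · rintro ⟨h, hq⟩
          exact ⟨h, by rw [← key x' h]; exact (f2 _ _).mp hq⟩
        · rintro ⟨h, hq⟩
          exact ⟨h, (f2 _ _).mpr (by rwa [key x' h])⟩
      · show _ ↔ (glue P Q m).evord (Sum.inr ⟨f y.val, _⟩) (Sum.inr ⟨f y'.val, _⟩)
        rw [glue_evord_inr_inr, glue_evord_inr_inr]
        exact f2 y.val y'.val
    · rintro (x | y)
      · show _ ↔ Sum.inl x ∈ (glue P Q m).S
        erw [glue_S_inl]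
      · show _ ↔ Sum.inr ⟨f y.val, _⟩ ∈ (glue P Q m).S
        constructor
        · intro h; exact absurd h (glue_S_inr _ y)
        · intro h; exact absurd h (glue_S_inr m _)
    · rintro (x | y)
      · show _ ↔ Sum.inl x ∈ (glue P Q m).T
        erw [glue_T_inl, glue_T_inl]
        constructor
        · rintro ⟨h, hq⟩
          exact ⟨h, by rw [← key x h]; exact (f4 _).mp hq⟩
        · rintro ⟨h, hq⟩
          exact ⟨h, (f4 _).mpr (by rwa [key x h])⟩
      · show _ ↔ Sum.inr ⟨f y.val, _⟩ ∈ (glue P Q m).T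
        erw [glue_T_inr, glue_T_inr]
        exact f4 y.val
    · rintro (x | y)
      · rfl
      · show (glue P Q m).lab (Sum.inr ⟨f y.val, _⟩) = _
        rw [glue_lab_inr, glue_lab_inr]
        exact f5 y.val

end PreIpomset

namespace PreIpomset

variable {σ : Type}

/-! #### Associativity of gluing -/

section Assoc

variable {a X Q : PreIpomset σ}

/-- Master lemma: two nested gluings with coherent matchings are isomorphic. -/
lemma glue_assoc_iso (m1 : Matching a X) (mq : Matching X Q)
    (m : Matching a (glue X Q mq)) (m2 : Matching (glue a X m1) Q)
    (C1 : ∀ (t : a.carrier) (h : t ∈ a.T),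
      (m.g ⟨t, h⟩).val = Sum.inl (m1.g ⟨t, h⟩).val)
    (C2a : ∀ (t : a.carrier) (ht : t ∈ a.T) (h2 : (m1.g ⟨t, ht⟩).val ∈ X.T)
      (hw : Sum.inl t ∈ (glue a X m1).T),
      (m2.g ⟨Sum.inl t, hw⟩).val = (mq.g ⟨(m1.g ⟨t, ht⟩).val, h2⟩).val)
    (C2b : ∀ (y : {y : X.carrier // y ∉ X.S}) (hy : y.val ∈ X.T)
      (hw : Sum.inr y ∈ (glue a X m1).T),
      (m2.g ⟨Sum.inr y, hw⟩).val = (mq.g ⟨y.val, hy⟩).val) :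
    Iso (glue a (glue X Q mq) m) (glue (glue a X m1) Q m2) := by
  refine ⟨⟨fun u => match u with
      | Sum.inl t => Sum.inl (Sum.inl t)
      | Sum.inr ⟨Sum.inl x, hz⟩ =>
          Sum.inl (Sum.inr ⟨x, fun hx => hz ((glue_S_inl mq x).mpr hx)⟩)
      | Sum.inr ⟨Sum.inr q, _⟩ => Sum.inr q,
    fun v => match v with
      | Sum.inl (Sum.inl t) => Sum.inl t
      | Sum.inl (Sum.inr ⟨x, hx⟩) =>
          Sum.inr ⟨Sum.inl x, fun hz => hx ((glue_S_inl mq x).mp hz)⟩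
      | Sum.inr q => Sum.inr ⟨Sum.inr q, glue_S_inr mq q⟩,
    ?_, ?_⟩, ?_, ?_, ?_, ?_, ?_⟩
  · rintro (t | ⟨x | q, hz⟩) <;> rfl
  · rintro ((t | ⟨x, hx⟩) | q) <;> rfl
  -- lt
  · rintro (t | ⟨x | q, hz⟩) (t' | ⟨x' | q', hz'⟩)
    -- 1: inl t, inl t'
    · show _ ↔ (glue (glue a X m1) Q m2).lt (Sum.inl (Sum.inl t)) (Sum.inl (Sum.inl t'))
      erw [glue_lt_inl_inl m, glue_lt_inl_inl m2, glue_lt_inl_inl m1]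
      constructor
      · rintro (h | ⟨h, h', hq⟩)
        · exact Or.inl (Or.inl h)
        · rw [C1 t h, C1 t' h', glue_lt_inl_inl mq] at hq
          rcases hq with hx | ⟨h2, h2', hq⟩
          · exact Or.inl (Or.inr ⟨h, h', hx⟩)
          · refine Or.inr ⟨(glue_T_inl m1 t).mpr ⟨h, h2⟩,
              (glue_T_inl m1 t').mpr ⟨h', h2'⟩, ?_⟩
            rw [C2a t h h2 _, C2a t' h' h2' _]
            exact hq
      · rintro ((h | ⟨h, h', hx⟩) | ⟨hw, hw', hq⟩)
        · exact Or.inl h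
        · refine Or.inr ⟨h, h', ?_⟩
          rw [C1 t h, C1 t' h', glue_lt_inl_inl mq]
          exact Or.inl hx
        · obtain ⟨h, h2⟩ := (glue_T_inl m1 t).mp hw
          obtain ⟨h', h2'⟩ := (glue_T_inl m1 t').mp hw'
          refine Or.inr ⟨h, h', ?_⟩
          rw [C1 t h, C1 t' h', glue_lt_inl_inl mq]
          rw [C2a t h h2 hw, C2a t' h' h2' hw'] at hq
          exact Or.inr ⟨h2, h2', hq⟩
    -- 2: inl t, inr (inl x')
    · show _ ↔ (glue (glue a X m1) Q m2).lt (Sum.inl (Sum.inl t))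
        (Sum.inl (Sum.inr ⟨x', fun hx => hz' ((glue_S_inl mq x').mpr hx)⟩))
      erw [glue_lt_inl_inr m, glue_lt_inl_inl m2, glue_lt_inl_inr m1]
      constructor
      · rintro (h | ⟨h, hq⟩)
        · exact Or.inl (Or.inl h)
        · rw [C1 t h] at hq
          rw [show ((⟨Sum.inl x', hz'⟩ : {z : (glue X Q mq).carrier // z ∉ (glue X Q mq).S}).val)
            = Sum.inl x' from rfl, glue_lt_inl_inl mq] at hq
          rcases hq with hx | ⟨h2, h2', hq⟩
          · exact Or.inl (Or.inr ⟨h, hx⟩)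
          · refine Or.inr ⟨(glue_T_inl m1 t).mpr ⟨h, h2⟩, (glue_T_inr m1 _).mpr h2', ?_⟩
            rw [C2a t h h2 _, C2b _ h2' _]
            exact hq
      · rintro ((h | ⟨h, hx⟩) | ⟨hw, hw', hq⟩)
        · exact Or.inl h
        · refine Or.inr ⟨h, ?_⟩
          rw [C1 t h]
          rw [show ((⟨Sum.inl x', hz'⟩ : {z : (glue X Q mq).carrier // z ∉ (glue X Q mq).S}).val)
            = Sum.inl x' from rfl, glue_lt_inl_inl mq]
          exact Or.inl hx
        · obtain ⟨h, h2⟩ := (glue_T_inl m1 t).mp hw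
          have h2' : x' ∈ X.T := (glue_T_inr m1 _).mp hw'
          refine Or.inr ⟨h, ?_⟩
          rw [C1 t h]
          rw [show ((⟨Sum.inl x', hz'⟩ : {z : (glue X Q mq).carrier // z ∉ (glue X Q mq).S}).val)
            = Sum.inl x' from rfl, glue_lt_inl_inl mq]
          rw [C2a t h h2 hw, C2b _ h2' hw'] at hq
          exact Or.inr ⟨h2, h2', hq⟩
    -- 3: inl t, inr (inr q')
    · show _ ↔ (glue (glue a X m1) Q m2).lt (Sum.inl (Sum.inl t)) (Sum.inr q')
      erw [glue_lt_inl_inr m, glue_lt_inl_inr m2]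
      constructor
      · rintro (h | ⟨h, hq⟩)
        · exact Or.inl (fun hw => h ((glue_T_inl m1 t).mp hw).choose)
        · rw [C1 t h] at hq
          rw [show ((⟨Sum.inr q', hz'⟩ : {z : (glue X Q mq).carrier // z ∉ (glue X Q mq).S}).val)
            = Sum.inr q' from rfl, glue_lt_inl_inr mq] at hq
          rcases hq with h2 | ⟨h2, hq⟩
          · refine Or.inl (fun hw => ?_)
            obtain ⟨h', hT⟩ := (glue_T_inl m1 t).mp hw
            exact h2 hT
          · exact Or.inr ⟨(glue_T_inl m1 t).mpr ⟨h, h2⟩, by rw [C2a t h h2 _]; exact hq⟩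
      · rintro (h | ⟨hw, hq⟩)
        · by_cases ha : t ∈ a.T
          · refine Or.inr ⟨ha, ?_⟩
            rw [C1 t ha]
            rw [show ((⟨Sum.inr q', hz'⟩ : {z : (glue X Q mq).carrier // z ∉ (glue X Q mq).S}).val)
              = Sum.inr q' from rfl, glue_lt_inl_inr mq]
            exact Or.inl (fun hT => h ((glue_T_inl m1 t).mpr ⟨ha, hT⟩))
          · exact Or.inl ha
        · obtain ⟨h, h2⟩ := (glue_T_inl m1 t).mp hw
          refine Or.inr ⟨h, ?_⟩
          rw [C1 t h]
          rw [show ((⟨Sum.inr q', hz'⟩ : {z : (glue X Q mq).carrier // z ∉ (glue X Q mq).S}).val)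
            = Sum.inr q' from rfl, glue_lt_inl_inr mq]
          rw [C2a t h h2 hw] at hq
          exact Or.inr ⟨h2, hq⟩
    -- 4: inr (inl x), inl t'
    · show _ ↔ (glue (glue a X m1) Q m2).lt
        (Sum.inl (Sum.inr ⟨x, fun hx => hz ((glue_S_inl mq x).mpr hx)⟩)) (Sum.inl (Sum.inl t'))
      erw [glue_lt_inr_inl m, glue_lt_inl_inl m2, glue_lt_inr_inl m1]
      constructor
      · rintro ⟨h', hq⟩
        rw [C1 t' h'] at hq
        rw [show ((⟨Sum.inl x, hz⟩ : {z : (glue X Q mq).carrier // z ∉ (glue X Q mq).S}).val)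
          = Sum.inl x from rfl, glue_lt_inl_inl mq] at hq
        rcases hq with hx | ⟨hxT, hT, hq⟩
        · exact Or.inl ⟨h', hx⟩
        · refine Or.inr ⟨(glue_T_inr m1 _).mpr hxT, (glue_T_inl m1 t').mpr ⟨h', hT⟩, ?_⟩
          rw [C2b _ hxT _, C2a t' h' hT _]
          exact hq
      · rintro (⟨h', hx⟩ | ⟨hw, hw', hq⟩)
        · refine ⟨h', ?_⟩
          rw [C1 t' h']
          rw [show ((⟨Sum.inl x, hz⟩ : {z : (glue X Q mq).carrier // z ∉ (glue X Q mq).S}).val)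
            = Sum.inl x from rfl, glue_lt_inl_inl mq]
          exact Or.inl hx
        · have hxT := (glue_T_inr m1 _).mp hw
          obtain ⟨h', hT⟩ := (glue_T_inl m1 t').mp hw'
          refine ⟨h', ?_⟩
          rw [C1 t' h']
          rw [show ((⟨Sum.inl x, hz⟩ : {z : (glue X Q mq).carrier // z ∉ (glue X Q mq).S}).val)
            = Sum.inl x from rfl, glue_lt_inl_inl mq]
          rw [C2b _ hxT hw, C2a t' h' hT hw'] at hq
          exact Or.inr ⟨hxT, hT, hq⟩
    -- 5: inr (inl x), inr (inl x')
    · show _ ↔ (glue (glue a X m1) Q m2).lt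
        (Sum.inl (Sum.inr ⟨x, fun hx => hz ((glue_S_inl mq x).mpr hx)⟩))
        (Sum.inl (Sum.inr ⟨x', fun hx => hz' ((glue_S_inl mq x').mpr hx)⟩))
      erw [glue_lt_inr_inr m, glue_lt_inl_inl m2, glue_lt_inr_inr m1]
      rw [show ((⟨Sum.inl x, hz⟩ : {z : (glue X Q mq).carrier // z ∉ (glue X Q mq).S}).val)
        = Sum.inl x from rfl,
        show ((⟨Sum.inl x', hz'⟩ : {z : (glue X Q mq).carrier // z ∉ (glue X Q mq).S}).val)
        = Sum.inl x' from rfl, glue_lt_inl_inl mq]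
      constructor
      · rintro (hx | ⟨hxT, hxT', hq⟩)
        · exact Or.inl hx
        · refine Or.inr ⟨(glue_T_inr m1 _).mpr hxT, (glue_T_inr m1 _).mpr hxT', ?_⟩
          rw [C2b _ hxT _, C2b _ hxT' _]
          exact hq
      · rintro (hx | ⟨hw, hw', hq⟩)
        · exact Or.inl hx
        · have hxT := (glue_T_inr m1 _).mp hw
          have hxT' := (glue_T_inr m1 _).mp hw'
          rw [C2b _ hxT hw, C2b _ hxT' hw'] at hq
          exact Or.inr ⟨hxT, hxT', hq⟩
    -- 6: inr (inl x), inr (inr q')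
    · show _ ↔ (glue (glue a X m1) Q m2).lt
        (Sum.inl (Sum.inr ⟨x, fun hx => hz ((glue_S_inl mq x).mpr hx)⟩)) (Sum.inr q')
      erw [glue_lt_inr_inr m, glue_lt_inl_inr m2]
      rw [show ((⟨Sum.inl x, hz⟩ : {z : (glue X Q mq).carrier // z ∉ (glue X Q mq).S}).val)
        = Sum.inl x from rfl,
        show ((⟨Sum.inr q', hz'⟩ : {z : (glue X Q mq).carrier // z ∉ (glue X Q mq).S}).val)
        = Sum.inr q' from rfl, glue_lt_inl_inr mq]
      constructor
      · rintro (h | ⟨hx, hq⟩)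
        · exact Or.inl (fun hw => h ((glue_T_inr m1 _).mp hw))
        · exact Or.inr ⟨(glue_T_inr m1 _).mpr hx, by rw [C2b _ hx _]; exact hq⟩
      · rintro (h | ⟨hw, hq⟩)
        · exact Or.inl (fun hx => h ((glue_T_inr m1 _).mpr hx))
        · have hx := (glue_T_inr m1 _).mp hw
          rw [C2b _ hx hw] at hq
          exact Or.inr ⟨hx, hq⟩
    -- 7: inr (inr q), inl t'
    · show _ ↔ (glue (glue a X m1) Q m2).lt (Sum.inr q) (Sum.inl (Sum.inl t'))
      erw [glue_lt_inr_inl m, glue_lt_inr_inl m2]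
      constructor
      · rintro ⟨h', hq⟩
        rw [C1 t' h'] at hq
        rw [show ((⟨Sum.inr q, hz⟩ : {z : (glue X Q mq).carrier // z ∉ (glue X Q mq).S}).val)
          = Sum.inr q from rfl, glue_lt_inr_inl mq] at hq
        obtain ⟨hT, hq⟩ := hq
        exact ⟨(glue_T_inl m1 t').mpr ⟨h', hT⟩, by rw [C2a t' h' hT _]; exact hq⟩
      · rintro ⟨hw, hq⟩
        obtain ⟨h', hT⟩ := (glue_T_inl m1 t').mp hw
        refine ⟨h', ?_⟩
        rw [C1 t' h']
        rw [show ((⟨Sum.inr q, hz⟩ : {z : (glue X Q mq).carrier // z ∉ (glue X Q mq).S}).val)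
          = Sum.inr q from rfl, glue_lt_inr_inl mq]
        rw [C2a t' h' hT hw] at hq
        exact ⟨hT, hq⟩
    -- 8: inr (inr q), inr (inl x')
    · show _ ↔ (glue (glue a X m1) Q m2).lt (Sum.inr q)
        (Sum.inl (Sum.inr ⟨x', fun hx => hz' ((glue_S_inl mq x').mpr hx)⟩))
      erw [glue_lt_inr_inr m, glue_lt_inr_inl m2]
      rw [show ((⟨Sum.inr q, hz⟩ : {z : (glue X Q mq).carrier // z ∉ (glue X Q mq).S}).val)
        = Sum.inr q from rfl,
        show ((⟨Sum.inl x', hz'⟩ : {z : (glue X Q mq).carrier // z ∉ (glue X Q mq).S}).val)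
        = Sum.inl x' from rfl, glue_lt_inr_inl mq]
      constructor
      · rintro ⟨hT, hq⟩
        exact ⟨(glue_T_inr m1 _).mpr hT, by rw [C2b _ hT _]; exact hq⟩
      · rintro ⟨hw, hq⟩
        have hT := (glue_T_inr m1 _).mp hw
        rw [C2b _ hT hw] at hq
        exact ⟨hT, hq⟩
    -- 9: inr (inr q), inr (inr q')
    · show _ ↔ (glue (glue a X m1) Q m2).lt (Sum.inr q) (Sum.inr q')
      rw [glue_lt_inr_inr m, glue_lt_inr_inr m2]
      rw [show ((⟨Sum.inr q, hz⟩ : {z : (glue X Q mq).carrier // z ∉ (glue X Q mq).S}).val)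
        = Sum.inr q from rfl,
        show ((⟨Sum.inr q', hz'⟩ : {z : (glue X Q mq).carrier // z ∉ (glue X Q mq).S}).val)
        = Sum.inr q' from rfl, glue_lt_inr_inr mq]
  -- evord
  · rintro (t | ⟨x | q, hz⟩) (t' | ⟨x' | q', hz'⟩)
    · show _ ↔ (glue (glue a X m1) Q m2).evord (Sum.inl (Sum.inl t)) (Sum.inl (Sum.inl t'))
      erw [glue_evord_inl_inl m, glue_evord_inl_inl m2, glue_evord_inl_inl m1]
    · show _ ↔ (glue (glue a X m1) Q m2).evord (Sum.inl (Sum.inl t))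
        (Sum.inl (Sum.inr ⟨x', fun hx => hz' ((glue_S_inl mq x').mpr hx)⟩))
      erw [glue_evord_inl_inr m, glue_evord_inl_inl m2, glue_evord_inl_inr m1]
      constructor
      · rintro ⟨h, hq⟩
        rw [C1 t h] at hq
        rw [show ((⟨Sum.inl x', hz'⟩ : {z : (glue X Q mq).carrier // z ∉ (glue X Q mq).S}).val)
          = Sum.inl x' from rfl, glue_evord_inl_inl mq] at hq
        exact ⟨h, hq⟩
      · rintro ⟨h, hq⟩
        refine ⟨h, ?_⟩
        rw [C1 t h]
        rw [show ((⟨Sum.inl x', hz'⟩ : {z : (glue X Q mq).carrier // z ∉ (glue X Q mq).S}).val)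
          = Sum.inl x' from rfl, glue_evord_inl_inl mq]
        exact hq
    · show _ ↔ (glue (glue a X m1) Q m2).evord (Sum.inl (Sum.inl t)) (Sum.inr q')
      erw [glue_evord_inl_inr m, glue_evord_inl_inr m2]
      constructor
      · rintro ⟨h, hq⟩
        rw [C1 t h] at hq
        rw [show ((⟨Sum.inr q', hz'⟩ : {z : (glue X Q mq).carrier // z ∉ (glue X Q mq).S}).val)
          = Sum.inr q' from rfl, glue_evord_inl_inr mq] at hq
        obtain ⟨h2, hq⟩ := hq
        exact ⟨(glue_T_inl m1 t).mpr ⟨h, h2⟩, by rw [C2a t h h2 _]; exact hq⟩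
      · rintro ⟨hw, hq⟩
        obtain ⟨h, h2⟩ := (glue_T_inl m1 t).mp hw
        refine ⟨h, ?_⟩
        rw [C1 t h]
        rw [show ((⟨Sum.inr q', hz'⟩ : {z : (glue X Q mq).carrier // z ∉ (glue X Q mq).S}).val)
          = Sum.inr q' from rfl, glue_evord_inl_inr mq]
        rw [C2a t h h2 hw] at hq
        exact ⟨h2, hq⟩
    · show _ ↔ (glue (glue a X m1) Q m2).evord
        (Sum.inl (Sum.inr ⟨x, fun hx => hz ((glue_S_inl mq x).mpr hx)⟩)) (Sum.inl (Sum.inl t'))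
      erw [glue_evord_inr_inl m, glue_evord_inl_inl m2, glue_evord_inr_inl m1]
      constructor
      · rintro ⟨h', hq⟩
        rw [C1 t' h'] at hq
        rw [show ((⟨Sum.inl x, hz⟩ : {z : (glue X Q mq).carrier // z ∉ (glue X Q mq).S}).val)
          = Sum.inl x from rfl, glue_evord_inl_inl mq] at hq
        exact ⟨h', hq⟩
      · rintro ⟨h', hq⟩
        refine ⟨h', ?_⟩
        rw [C1 t' h']
        rw [show ((⟨Sum.inl x, hz⟩ : {z : (glue X Q mq).carrier // z ∉ (glue X Q mq).S}).val)
          = Sum.inl x from rfl, glue_evord_inl_inl mq]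
        exact hq
    · show _ ↔ (glue (glue a X m1) Q m2).evord
        (Sum.inl (Sum.inr ⟨x, fun hx => hz ((glue_S_inl mq x).mpr hx)⟩))
        (Sum.inl (Sum.inr ⟨x', fun hx => hz' ((glue_S_inl mq x').mpr hx)⟩))
      erw [glue_evord_inr_inr m, glue_evord_inl_inl m2, glue_evord_inr_inr m1]
      rw [show ((⟨Sum.inl x, hz⟩ : {z : (glue X Q mq).carrier // z ∉ (glue X Q mq).S}).val)
        = Sum.inl x from rfl,
        show ((⟨Sum.inl x', hz'⟩ : {z : (glue X Q mq).carrier // z ∉ (glue X Q mq).S}).val)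
        = Sum.inl x' from rfl, glue_evord_inl_inl mq]
    · show _ ↔ (glue (glue a X m1) Q m2).evord
        (Sum.inl (Sum.inr ⟨x, fun hx => hz ((glue_S_inl mq x).mpr hx)⟩)) (Sum.inr q')
      erw [glue_evord_inr_inr m, glue_evord_inl_inr m2]
      rw [show ((⟨Sum.inl x, hz⟩ : {z : (glue X Q mq).carrier // z ∉ (glue X Q mq).S}).val)
        = Sum.inl x from rfl,
        show ((⟨Sum.inr q', hz'⟩ : {z : (glue X Q mq).carrier // z ∉ (glue X Q mq).S}).val)
        = Sum.inr q' from rfl, glue_evord_inl_inr mq]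
      constructor
      · rintro ⟨hx, hq⟩
        exact ⟨(glue_T_inr m1 _).mpr hx, by rw [C2b _ hx _]; exact hq⟩
      · rintro ⟨hw, hq⟩
        have hx := (glue_T_inr m1 _).mp hw
        rw [C2b _ hx hw] at hq
        exact ⟨hx, hq⟩
    · show _ ↔ (glue (glue a X m1) Q m2).evord (Sum.inr q) (Sum.inl (Sum.inl t'))
      erw [glue_evord_inr_inl m, glue_evord_inr_inl m2]
      constructor
      · rintro ⟨h', hq⟩
        rw [C1 t' h'] at hq
        rw [show ((⟨Sum.inr q, hz⟩ : {z : (glue X Q mq).carrier // z ∉ (glue X Q mq).S}).val)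
          = Sum.inr q from rfl, glue_evord_inr_inl mq] at hq
        obtain ⟨hT, hq⟩ := hq
        exact ⟨(glue_T_inl m1 t').mpr ⟨h', hT⟩, by rw [C2a t' h' hT _]; exact hq⟩
      · rintro ⟨hw, hq⟩
        obtain ⟨h', hT⟩ := (glue_T_inl m1 t').mp hw
        refine ⟨h', ?_⟩
        rw [C1 t' h']
        rw [show ((⟨Sum.inr q, hz⟩ : {z : (glue X Q mq).carrier // z ∉ (glue X Q mq).S}).val)
          = Sum.inr q from rfl, glue_evord_inr_inl mq]
        rw [C2a t' h' hT hw] at hq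
        exact ⟨hT, hq⟩
    · show _ ↔ (glue (glue a X m1) Q m2).evord (Sum.inr q)
        (Sum.inl (Sum.inr ⟨x', fun hx => hz' ((glue_S_inl mq x').mpr hx)⟩))
      erw [glue_evord_inr_inr m, glue_evord_inr_inl m2]
      rw [show ((⟨Sum.inr q, hz⟩ : {z : (glue X Q mq).carrier // z ∉ (glue X Q mq).S}).val)
        = Sum.inr q from rfl,
        show ((⟨Sum.inl x', hz'⟩ : {z : (glue X Q mq).carrier // z ∉ (glue X Q mq).S}).val)
        = Sum.inl x' from rfl, glue_evord_inr_inl mq]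
      constructor
      · rintro ⟨hT, hq⟩
        exact ⟨(glue_T_inr m1 _).mpr hT, by rw [C2b _ hT _]; exact hq⟩
      · rintro ⟨hw, hq⟩
        have hT := (glue_T_inr m1 _).mp hw
        rw [C2b _ hT hw] at hq
        exact ⟨hT, hq⟩
    · show _ ↔ (glue (glue a X m1) Q m2).evord (Sum.inr q) (Sum.inr q')
      rw [glue_evord_inr_inr m, glue_evord_inr_inr m2]
      rw [show ((⟨Sum.inr q, hz⟩ : {z : (glue X Q mq).carrier // z ∉ (glue X Q mq).S}).val)
        = Sum.inr q from rfl,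
        show ((⟨Sum.inr q', hz'⟩ : {z : (glue X Q mq).carrier // z ∉ (glue X Q mq).S}).val)
        = Sum.inr q' from rfl, glue_evord_inr_inr mq]
  -- S
  · rintro (t | ⟨x | q, hz⟩)
    · show _ ↔ Sum.inl (Sum.inl t) ∈ (glue (glue a X m1) Q m2).S
      erw [glue_S_inl m, glue_S_inl m2, glue_S_inl m1]
    · show _ ↔ Sum.inl (Sum.inr ⟨x, fun hx => hz ((glue_S_inl mq x).mpr hx)⟩)
        ∈ (glue (glue a X m1) Q m2).S
      exact iff_of_false (glue_S_inr m _)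
        (fun h => glue_S_inr m1 _ ((glue_S_inl m2 _).mp h))
    · show _ ↔ Sum.inr q ∈ (glue (glue a X m1) Q m2).S
      exact iff_of_false (glue_S_inr m _) (glue_S_inr m2 _)
  -- T
  · rintro (t | ⟨x | q, hz⟩)
    · show _ ↔ Sum.inl (Sum.inl t) ∈ (glue (glue a X m1) Q m2).T
      erw [glue_T_inl m, glue_T_inl m2]
      constructor
      · rintro ⟨h, hq⟩
        erw [C1 t h, glue_T_inl mq] at hq
        obtain ⟨h2, hT⟩ := hq
        exact ⟨(glue_T_inl m1 t).mpr ⟨h, h2⟩, by rw [C2a t h h2 _]; exact hT⟩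
      · rintro ⟨hw, hT⟩
        obtain ⟨h, h2⟩ := (glue_T_inl m1 t).mp hw
        refine ⟨h, ?_⟩
        erw [C1 t h, glue_T_inl mq]
        rw [C2a t h h2 hw] at hT
        exact ⟨h2, hT⟩
    · show _ ↔ Sum.inl (Sum.inr ⟨x, fun hx => hz ((glue_S_inl mq x).mpr hx)⟩)
        ∈ (glue (glue a X m1) Q m2).T
      erw [glue_T_inr m, glue_T_inl m2]
      erw [show ((⟨Sum.inl x, hz⟩ : {z : (glue X Q mq).carrier // z ∉ (glue X Q mq).S}).val)
        = Sum.inl x from rfl, glue_T_inl mq]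
      constructor
      · rintro ⟨hx, hT⟩
        exact ⟨(glue_T_inr m1 _).mpr hx, by rw [C2b _ hx _]; exact hT⟩
      · rintro ⟨hw, hT⟩
        have hx := (glue_T_inr m1 _).mp hw
        rw [C2b _ hx hw] at hT
        exact ⟨hx, hT⟩
    · show _ ↔ Sum.inr q ∈ (glue (glue a X m1) Q m2).T
      erw [glue_T_inr m, glue_T_inr m2]
  -- lab
  · rintro (t | ⟨x | q, hz⟩) <;> rfl

end Assoc

end PreIpomset

namespace PreIpomset

variable {σ : Type}

section Core

variable {a X Q : PreIpomset σ}

lemma mem_glue_T_iff {P Q : PreIpomset σ} (m : Matching P Q) (u : (glue P Q m).carrier) :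
    u ∈ (glue P Q m).T ↔ ∃ y, glueQOf P Q m u = some y ∧ y ∈ Q.T := Iff.rfl

lemma mem_glue_S_iff {P Q : PreIpomset σ} (m : Matching P Q) (u : (glue P Q m).carrier) :
    u ∈ (glue P Q m).S ↔ ∃ x, gluePOf P Q u = some x ∧ x ∈ P.S := Iff.rfl

lemma glue_evord_of_some (m1 : Matching a X) {w w' : (glue a X m1).carrier} {y y' : X.carrier}
    (h : glueQOf a X m1 w = some y) (h' : glueQOf a X m1 w' = some y') :
    (glue a X m1).evord w w' ↔ X.evord y y' := by
  cases w with
  | inl t =>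
    obtain ⟨ht, rfl⟩ := glueQOf_inl_eq_some m1 h
    cases w' with
    | inl t' =>
      obtain ⟨ht', rfl⟩ := glueQOf_inl_eq_some m1 h'
      rw [glue_evord_inl_inl m1]
      exact m1.evord_iff ⟨t, ht⟩ ⟨t', ht'⟩
    | inr y0 =>
      cases Option.some.inj h'
      rw [glue_evord_inl_inr m1]
      constructor
      · rintro ⟨h0, hq⟩; exact hq
      · intro hq; exact ⟨ht, hq⟩
  | inr y0 =>
    cases Option.some.inj h
    cases w' with
    | inl t' =>
      obtain ⟨ht', rfl⟩ := glueQOf_inl_eq_some m1 h'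
      rw [glue_evord_inr_inl m1]
      constructor
      · rintro ⟨h0, hq⟩; exact hq
      · intro hq; exact ⟨ht', hq⟩
    | inr y1 =>
      cases Option.some.inj h'
      rw [glue_evord_inr_inr m1]

lemma glue_lt_of_some (m1 : Matching a X)
    (haT : ∀ t t', t ∈ a.T → t' ∈ a.T → ¬ a.lt t t')
    {w w' : (glue a X m1).carrier} {y y' : X.carrier}
    (h : glueQOf a X m1 w = some y) (h' : glueQOf a X m1 w' = some y') :
    (glue a X m1).lt w w' ↔ X.lt y y' := by
  cases w with
  | inl t =>
    obtain ⟨ht, rfl⟩ := glueQOf_inl_eq_some m1 h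
    cases w' with
    | inl t' =>
      obtain ⟨ht', rfl⟩ := glueQOf_inl_eq_some m1 h'
      rw [glue_lt_inl_inl m1]
      constructor
      · rintro (hq | ⟨h0, h0', hq⟩)
        · exact absurd hq (haT t t' ht ht')
        · exact hq
      · intro hq; exact Or.inr ⟨ht, ht', hq⟩
    | inr y0 =>
      cases Option.some.inj h'
      rw [glue_lt_inl_inr m1]
      constructor
      · rintro (hq | ⟨h0, hq⟩)
        · exact absurd ht hq
        · exact hq
      · intro hq; exact Or.inr ⟨ht, hq⟩
  | inr y0 =>
    cases Option.some.inj h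
    cases w' with
    | inl t' =>
      obtain ⟨ht', rfl⟩ := glueQOf_inl_eq_some m1 h'
      rw [glue_lt_inr_inl m1]
      constructor
      · rintro ⟨h0, hq⟩; exact hq
      · intro hq; exact ⟨ht', hq⟩
    | inr y1 =>
      cases Option.some.inj h'
      rw [glue_lt_inr_inr m1]

lemma glue_lab_of_some (m1 : Matching a X) {w : (glue a X m1).carrier} {y : X.carrier}
    (h : glueQOf a X m1 w = some y) : (glue a X m1).lab w = X.lab y := by
  cases w with
  | inl t =>
    obtain ⟨ht, rfl⟩ := glueQOf_inl_eq_some m1 h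
    exact (m1.lab_eq ⟨t, ht⟩).symm
  | inr y0 =>
    cases Option.some.inj h
    rfl

lemma glue_T_of_some (m1 : Matching a X) {w : (glue a X m1).carrier} {y : X.carrier}
    (h : glueQOf a X m1 w = some y) : (w ∈ (glue a X m1).T ↔ y ∈ X.T) := by
  constructor
  · rintro ⟨y0, hy0, hT⟩
    rw [h] at hy0; cases Option.some.inj hy0; exact hT
  · intro hT; exact ⟨y, h, hT⟩

/-- The equivalence `P.S ≃ S_{P*Q}`. -/
noncomputable def sEquiv {P Q : PreIpomset σ} (m : Matching P Q) :
    {x : P.carrier // x ∈ P.S} ≃ {u : (glue P Q m).carrier // u ∈ (glue P Q m).S} where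
  toFun s := ⟨Sum.inl s.val, (glue_S_inl m _).mpr s.property⟩
  invFun u := ⟨((mem_glue_S_iff m u.val).mp u.property).choose,
    ((mem_glue_S_iff m u.val).mp u.property).choose_spec.2⟩
  left_inv s := by
    apply Subtype.ext
    have hs := ((mem_glue_S_iff m (Sum.inl s.val)).mp
      ((glue_S_inl m _).mpr s.property)).choose_spec
    exact (Option.some.inj hs.1).symm
  right_inv u := by
    apply Subtype.ext
    have hs := ((mem_glue_S_iff m u.val).mp u.property).choose_spec
    exact (gluePOf_eq_some hs.1).symm

lemma sEquiv_spec {P Q : PreIpomset σ} (m : Matching P Q) (s : {x : P.carrier // x ∈ P.S}) :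
    ((sEquiv m) s).val = Sum.inl s.val := rfl

lemma sEquiv_symm_spec {P Q : PreIpomset σ} (m : Matching P Q)
    (u : {u : (glue P Q m).carrier // u ∈ (glue P Q m).S}) :
    u.val = Sum.inl ((sEquiv m).symm u).val :=
  gluePOf_eq_some ((mem_glue_S_iff m u.val).mp u.property).choose_spec.1

/-- The map sending an element of `X.T` to the corresponding element of `T_{a*X}`. -/
noncomputable def tmapFun (m1 : Matching a X) (y : {y : X.carrier // y ∈ X.T}) :
    {w : (glue a X m1).carrier // w ∈ (glue a X m1).T} :=
  if h : y.val ∈ X.S then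
    ⟨Sum.inl (m1.g.symm ⟨y.val, h⟩).val,
      (glue_T_inl m1 _).mpr ⟨(m1.g.symm ⟨y.val, h⟩).property, by
        rw [show (⟨(m1.g.symm ⟨y.val, h⟩).val, (m1.g.symm ⟨y.val, h⟩).property⟩ :
          {x : a.carrier // x ∈ a.T}) = m1.g.symm ⟨y.val, h⟩ from rfl,
          Equiv.apply_symm_apply]
        exact y.property⟩⟩
  else ⟨Sum.inr ⟨y.val, h⟩, (glue_T_inr m1 _).mpr y.property⟩

lemma tmapFun_spec (m1 : Matching a X) (y : {y : X.carrier // y ∈ X.T}) :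
    glueQOf a X m1 (tmapFun m1 y).val = some y.val := by
  unfold tmapFun
  split_ifs with h
  · show glueQOf a X m1 (Sum.inl (m1.g.symm ⟨y.val, h⟩).val) = some y.val
    rw [glueQOf_inl m1 (m1.g.symm ⟨y.val, h⟩).property]
    congr 1
    rw [show (⟨(m1.g.symm ⟨y.val, h⟩).val, (m1.g.symm ⟨y.val, h⟩).property⟩ :
      {x : a.carrier // x ∈ a.T}) = m1.g.symm ⟨y.val, h⟩ from rfl,
      Equiv.apply_symm_apply]
  · rfl

lemma tmapFun_eq (m1 : Matching a X) {w : (glue a X m1).carrier} {y : X.carrier}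
    (hsome : glueQOf a X m1 w = some y) (hy : y ∈ X.T) (hw : w ∈ (glue a X m1).T) :
    (tmapFun m1 ⟨y, hy⟩).val = w := by
  cases w with
  | inl t =>
    obtain ⟨ht, hval⟩ := glueQOf_inl_eq_some m1 hsome
    subst hval
    unfold tmapFun
    rw [dif_pos (m1.g ⟨t, ht⟩).property]
    show Sum.inl (m1.g.symm ⟨(m1.g ⟨t, ht⟩).val, (m1.g ⟨t, ht⟩).property⟩).val = Sum.inl t
    congr 1
    rw [show (⟨(m1.g ⟨t, ht⟩).val, (m1.g ⟨t, ht⟩).property⟩ : {y : X.carrier // y ∈ X.S})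
      = m1.g ⟨t, ht⟩ from rfl, Equiv.symm_apply_apply]
  | inr y0 =>
    have hv : y0.val = y := Option.some.inj hsome
    subst hv
    unfold tmapFun
    rw [dif_neg y0.property]

/-- The equivalence `X.T ≃ T_{a*X}`. -/
noncomputable def tmap (m1 : Matching a X) :
    {y : X.carrier // y ∈ X.T} ≃ {w : (glue a X m1).carrier // w ∈ (glue a X m1).T} where
  toFun := tmapFun m1
  invFun w := ⟨((mem_glue_T_iff m1 w.val).mp w.property).choose,
    ((mem_glue_T_iff m1 w.val).mp w.property).choose_spec.2⟩
  left_inv y := by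
    apply Subtype.ext
    have hs := ((mem_glue_T_iff m1 (tmapFun m1 y).val).mp (tmapFun m1 y).property).choose_spec
    exact Option.some.inj (hs.1.symm.trans (tmapFun_spec m1 y))
  right_inv w := by
    apply Subtype.ext
    have hs := ((mem_glue_T_iff m1 w.val).mp w.property).choose_spec
    exact tmapFun_eq m1 hs.1 hs.2 w.property

lemma tmap_symm_spec (m1 : Matching a X)
    (w : {w : (glue a X m1).carrier // w ∈ (glue a X m1).T}) :
    glueQOf a X m1 w.val = some ((tmap m1).symm w).val :=
  ((mem_glue_T_iff m1 w.val).mp w.property).choose_spec.1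

/-- Forward core: the matching `X ≃ Q` derived from `m2 : T_{a*X} ≅ S_Q`. -/
noncomputable def coreMq (m1 : Matching a X) (m2 : Matching (glue a X m1) Q) :
    Matching X Q where
  g := (tmap m1).trans m2.g
  evord_iff y y' :=
    ((glue_evord_of_some m1 (tmapFun_spec m1 y) (tmapFun_spec m1 y')).symm).trans
      (m2.evord_iff (tmap m1 y) (tmap m1 y'))
  lab_eq y := (m2.lab_eq (tmap m1 y)).trans (glue_lab_of_some m1 (tmapFun_spec m1 y))

/-- Forward core: the matching `a ≃ X*Q`. -/
noncomputable def coreM (m1 : Matching a X) (m2 : Matching (glue a X m1) Q) :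
    Matching a (glue X Q (coreMq m1 m2)) where
  g := m1.g.trans (sEquiv (coreMq m1 m2))
  evord_iff t t' := by
    refine (m1.evord_iff t t').trans ?_
    exact (glue_evord_inl_inl (coreMq m1 m2) _ _).symm
  lab_eq t := by
    show (glue X Q (coreMq m1 m2)).lab (Sum.inl (m1.g t).val) = a.lab t.val
    rw [glue_lab_inl]
    exact m1.lab_eq t

lemma assocA {a X P Q R : PreIpomset σ} (h1 : GlueRel a X P) (h2 : GlueRel P Q R) :
    ∃ Z, GlueRel X Q Z ∧ GlueRel a Z R := by
  obtain ⟨m1, hiP⟩ := h1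
  obtain ⟨m2, hiR⟩ := GlueRel.congr_left hiP h2
  refine ⟨glue X Q (coreMq m1 m2), ⟨coreMq m1 m2, Iso.refl _⟩,
    ⟨coreM m1 m2, Iso.trans ?_ hiR⟩⟩
  refine glue_assoc_iso m1 (coreMq m1 m2) (coreM m1 m2) m2 (fun t h => rfl) ?_ ?_
  · intro t ht h2' hw
    show (m2.g ⟨Sum.inl t, hw⟩).val = (m2.g (tmap m1 ⟨(m1.g ⟨t, ht⟩).val, h2'⟩)).val
    exact congrArg (fun z => (m2.g z).val)
      (Subtype.ext (tmapFun_eq m1 (glueQOf_inl m1 ht) h2' hw)).symm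
  · intro y hy hw
    show (m2.g ⟨Sum.inr y, hw⟩).val = (m2.g (tmap m1 ⟨y.val, hy⟩)).val
    exact congrArg (fun z => (m2.g z).val)
      (Subtype.ext (tmapFun_eq m1 (glueQOf_inr m1 y) hy hw)).symm

/-- Reverse core: the matching `a ≃ X` derived from `m : T_a ≅ S_{X*Q}`. -/
noncomputable def revM1 {mq : Matching X Q} (m : Matching a (glue X Q mq)) :
    Matching a X where
  g := m.g.trans (sEquiv mq).symm
  evord_iff t t' := by
    refine (m.evord_iff t t').trans ?_
    rw [sEquiv_symm_spec mq (m.g t), sEquiv_symm_spec mq (m.g t'), glue_evord_inl_inl mq]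
    exact Iff.rfl
  lab_eq t := by
    have := m.lab_eq t
    rw [sEquiv_symm_spec mq (m.g t)] at this
    exact this

lemma revM1_spec {mq : Matching X Q} (m : Matching a (glue X Q mq))
    (t : {t : a.carrier // t ∈ a.T}) :
    (m.g t).val = Sum.inl ((revM1 m).g t).val :=
  sEquiv_symm_spec mq (m.g t)

/-- Reverse core: the matching `T_{a*X} ≅ S_Q`. -/
noncomputable def revM2 {mq : Matching X Q} (m : Matching a (glue X Q mq)) :
    Matching (glue a X (revM1 m)) Q where
  g := ((tmap (revM1 m)).symm).trans mq.g
  evord_iff w w' :=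
    (glue_evord_of_some (revM1 m) (tmap_symm_spec (revM1 m) w)
      (tmap_symm_spec (revM1 m) w')).trans
      (mq.evord_iff ((tmap (revM1 m)).symm w) ((tmap (revM1 m)).symm w'))
  lab_eq w :=
    (mq.lab_eq ((tmap (revM1 m)).symm w)).trans
      (glue_lab_of_some (revM1 m) (tmap_symm_spec (revM1 m) w)).symm

lemma assocB {a X Q Z' R : PreIpomset σ} (h1 : GlueRel X Q Z') (h2 : GlueRel a Z' R) :
    ∃ P, GlueRel a X P ∧ GlueRel P Q R := by
  obtain ⟨mq, hiZ⟩ := h1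
  obtain ⟨m, hiR⟩ := GlueRel.congr_right hiZ h2
  refine ⟨glue a X (revM1 m), ⟨revM1 m, Iso.refl _⟩, ⟨revM2 m, Iso.trans ?_ hiR⟩⟩
  refine (glue_assoc_iso (revM1 m) mq m (revM2 m) (fun t h => revM1_spec m ⟨t, h⟩) ?_ ?_).symm
  · intro t ht h2' hw
    show (mq.g ((tmap (revM1 m)).symm ⟨Sum.inl t, hw⟩)).val = _
    refine congrArg (fun z => (mq.g z).val) (Subtype.ext ?_)
    exact Option.some.inj ((tmap_symm_spec (revM1 m) ⟨Sum.inl t, hw⟩).symm.trans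
      (glueQOf_inl (revM1 m) ht))
  · intro y hy hw
    show (mq.g ((tmap (revM1 m)).symm ⟨Sum.inr y, hw⟩)).val = _
    refine congrArg (fun z => (mq.g z).val) (Subtype.ext ?_)
    exact Option.some.inj ((tmap_symm_spec (revM1 m) ⟨Sum.inr y, hw⟩).symm.trans
      (glueQOf_inr (revM1 m) y))

end Core

end PreIpomset

namespace PreIpomset

variable {σ : Type}

/-! #### Interface lemmas -/

lemma Iso.srcIface_congr {P Q : PreIpomset σ} (h : Iso P Q) :
    Iso P.srcIface Q.srcIface := by
  obtain ⟨f, f1, f2, f3, f4, f5⟩ := h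
  refine ⟨Equiv.subtypeEquiv f f3, ?_, ?_, ?_, ?_, ?_⟩
  · intro x y; exact f1 x.val y.val
  · intro x y; exact f2 x.val y.val
  · intro x; exact Iff.rfl
  · intro x; exact Iff.rfl
  · intro x; exact f5 x.val

lemma Iso.tgtIface_congr {P Q : PreIpomset σ} (h : Iso P Q) :
    Iso P.tgtIface Q.tgtIface := by
  obtain ⟨f, f1, f2, f3, f4, f5⟩ := h
  refine ⟨Equiv.subtypeEquiv f f4, ?_, ?_, ?_, ?_, ?_⟩
  · intro x y; exact f1 x.val y.val
  · intro x y; exact f2 x.val y.val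
  · intro x; exact Iff.rfl
  · intro x; exact Iff.rfl
  · intro x; exact f5 x.val

lemma srcIface_glue {P Q : PreIpomset σ} (m : Matching P Q) (hQ : Discrete Q.srcIface) :
    Iso ((glue P Q m).srcIface) P.srcIface := by
  refine ⟨(sEquiv m).symm, ?_, ?_, fun _ => Iff.rfl, fun _ => Iff.rfl, ?_⟩
  · intro u u'
    show (glue P Q m).lt u.val u'.val ↔ P.lt ((sEquiv m).symm u).val ((sEquiv m).symm u').val
    rw [sEquiv_symm_spec m u, sEquiv_symm_spec m u', glue_lt_inl_inl m]
    constructor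
    · rintro (h | ⟨h, h', hq⟩)
      · exact h
      · exact absurd hq (hQ (m.g ⟨_, h⟩) (m.g ⟨_, h'⟩))
    · exact Or.inl
  · intro u u'
    show (glue P Q m).evord u.val u'.val ↔
      P.evord ((sEquiv m).symm u).val ((sEquiv m).symm u').val
    rw [sEquiv_symm_spec m u, sEquiv_symm_spec m u', glue_evord_inl_inl m]
  · intro u
    show P.lab ((sEquiv m).symm u).val = (glue P Q m).lab u.val
    rw [sEquiv_symm_spec m u]
    rfl

lemma tgtIface_glue {P Q : PreIpomset σ} (m : Matching P Q) (hP : Discrete P.tgtIface) :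
    Iso ((glue P Q m).tgtIface) Q.tgtIface := by
  have haT : ∀ t t', t ∈ P.T → t' ∈ P.T → ¬ P.lt t t' := fun t t' h h' => hP ⟨t, h⟩ ⟨t', h'⟩
  refine ⟨(tmap m).symm, ?_, ?_, fun _ => Iff.rfl, fun _ => Iff.rfl, ?_⟩
  · intro u u'
    exact glue_lt_of_some m haT (tmap_symm_spec m u) (tmap_symm_spec m u')
  · intro u u'
    exact glue_evord_of_some m (tmap_symm_spec m u) (tmap_symm_spec m u')
  · intro u
    exact (glue_lab_of_some m (tmap_symm_spec m u)).symm

lemma iso_srcIface_idOf {C : PreIpomset σ} (hS : C.S = ∅) (hT : C.T = ∅) :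
    Iso (C.idOf.srcIface) C := by
  refine ⟨Equiv.Set.univ C.carrier, fun x y => Iff.rfl, fun x y => Iff.rfl, ?_, ?_,
    fun x => rfl⟩
  · intro x; rw [hS]; exact Iff.rfl
  · intro x; rw [hT]; exact Iff.rfl

lemma iso_tgtIface_idOf {C : PreIpomset σ} (hS : C.S = ∅) (hT : C.T = ∅) :
    Iso (C.idOf.tgtIface) C := by
  refine ⟨Equiv.Set.univ C.carrier, fun x y => Iff.rfl, fun x y => Iff.rfl, ?_, ?_,
    fun x => rfl⟩
  · intro x; rw [hS]; exact Iff.rfl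
  · intro x; rw [hT]; exact Iff.rfl

lemma matching_iface_iso {P Q : PreIpomset σ} (m : Matching P Q)
    (hP : Discrete P.tgtIface) (hQ : Discrete Q.srcIface) : Iso P.tgtIface Q.srcIface := by
  refine ⟨m.g, ?_, ?_, fun _ => Iff.rfl, fun _ => Iff.rfl, ?_⟩
  · intro x y; exact iff_of_false (hP x y) (hQ (m.g x) (m.g y))
  · intro x y; exact m.evord_iff x y
  · intro x; exact m.lab_eq x

lemma idOf_isIpomset {C : PreIpomset σ} (h : C.IsConclist) : C.idOf.IsIpomset := by
  obtain ⟨⟨i1, i2, i3, i4, i5, i6, i7, i8⟩, hd, hS, hT⟩ := h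
  exact ⟨i1, i2, i3, i4, i5, fun x _ y => hd y x, fun x _ y => hd x y, i8⟩

end PreIpomset

namespace PAutomaton

open PreIpomset

variable {σ : Type}

lemma Rec.iso {A : PAutomaton σ} {p r : A.Q} {α : Path A p r} {R R' : PreIpomset σ}
    (h : Rec α R) (hi : Iso R R') : Rec α R' := by
  induction h with
  | nil q R0 h0 => exact Rec.nil q R' (h0.trans hi)
  | cons e rest hrec hge ih => exact Rec.cons e rest hrec (hge.iso_right hi)

lemma rec_ifaces {A : PAutomaton σ} (hpa : A.IsPA) :
    ∀ {p r : A.Q} {α : Path A p r} {R : PreIpomset σ}, Rec α R →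
      Iso R.srcIface (A.mu p) ∧ Iso R.tgtIface (A.mu r) := by
  intro p r α R h
  induction h with
  | nil q' R0 h0 =>
    obtain ⟨hi, hd, hS, hT⟩ := hpa.2.2.1 q'
    exact ⟨(Iso.srcIface_congr h0).symm.trans (iso_srcIface_idOf hS hT),
      (Iso.tgtIface_congr h0).symm.trans (iso_tgtIface_idOf hS hT)⟩
  | cons e rest hrec hge ih =>
    obtain ⟨m, hiso⟩ := hge
    have hdR' : Discrete (PreIpomset.srcIface _) :=
      Discrete.of_iso ih.1 (hpa.2.2.1 (A.tgt e)).2.1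
    have hdE : Discrete (A.lab e).tgtIface :=
      Discrete.of_iso (hpa.2.2.2.2.2 e) (hpa.2.2.1 (A.tgt e)).2.1
    constructor
    · exact (Iso.srcIface_congr hiso.symm).trans
        ((srcIface_glue m hdR').trans (hpa.2.2.2.2.1 e))
    · exact (Iso.tgtIface_congr hiso.symm).trans ((tgtIface_glue m hdE).trans ih.2)

/-- Lift a path of `A` to `A.plusAut`. -/
def liftPath {A : PAutomaton σ} : ∀ {p r : A.Q}, Path A p r → Path A.plusAut p r
  | _, _, .nil q => Path.nil (A := A.plusAut) q
  | _, _, .cons e rest => Path.cons (A := A.plusAut) (Sum.inl e) (liftPath rest)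

lemma liftRec {A : PAutomaton σ} {p r : A.Q} {α : Path A p r} {R : PreIpomset σ}
    (h : Rec α R) : Rec (liftPath α) R := by
  induction h with
  | nil q R0 h0 =>
    show Rec (Path.nil (A := A.plusAut) q) R0
    exact Rec.nil (A := A.plusAut) q R0 h0
  | cons e rest hrec hge ih =>
    show Rec (Path.cons (A := A.plusAut) (Sum.inl e) (liftPath rest)) _
    exact Rec.cons (A := A.plusAut) (Sum.inl e) (liftPath rest) ih hge

/-- Append a plus-automaton path to a lifted path of `A`. -/
def appendPath {A : PAutomaton σ} :
    ∀ {p r z : A.Q}, Path A p r → Path A.plusAut r z → Path A.plusAut p z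
  | _, _, _, .nil _, β => β
  | _, _, _, .cons e rest, β => Path.cons (A := A.plusAut) (Sum.inl e) (appendPath rest β)

lemma appendRecAux {A : PAutomaton σ} :
    ∀ {p r : A.Q} {α : Path A p r} {P : PreIpomset σ}, Rec α P →
    ∀ {z : A.Q} (γ : Path A.plusAut r z) {Q : PreIpomset σ},
    (∀ R' : PreIpomset σ, GlueRel ((A.mu r).idOf) Q R' → Rec γ R') →
    ∀ {R : PreIpomset σ}, GlueRel P Q R → Rec (appendPath α γ) R := by
  intro p r α P h
  induction h with
  | nil q' R0 h0 =>
    intro z γ Q H R hg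
    show Rec γ R
    exact H R (GlueRel.congr_left h0 hg)
  | cons e rest hrec hge ih =>
    intro z γ Q H R hg
    obtain ⟨Z, hZQ, haZ⟩ := assocA hge hg
    show Rec (Path.cons (A := A.plusAut) (Sum.inl e) (appendPath rest γ)) R
    exact Rec.cons (A := A.plusAut) (Sum.inl e) (appendPath rest γ) (ih γ H hZQ) haZ

lemma plusAut_isPA {A : PAutomaton σ} (hpa : A.IsPA) : A.plusAut.IsPA := by
  obtain ⟨hQfin, hEfin, hmu, hlab, hsrc, htgt⟩ := hpa
  refine ⟨hQfin, ?_, hmu, ?_, ?_, ?_⟩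
  · haveI := hQfin; haveI := hEfin
    show Finite (A.E ⊕
      {pq : A.Q × A.Q // pq.1 ∈ A.accept ∧ pq.2 ∈ A.start ∧ Iso (A.mu pq.1) (A.mu pq.2)})
    infer_instance
  · rintro (e | c)
    · exact hlab e
    · exact idOf_isIpomset (hmu c.val.1)
  · rintro (e | c)
    · exact hsrc e
    · obtain ⟨hi, hd, hS, hT⟩ := hmu c.val.1
      exact iso_srcIface_idOf hS hT
  · rintro (e | c)
    · exact htgt e
    · obtain ⟨hi, hd, hS, hT⟩ := hmu c.val.1
      exact (iso_tgtIface_idOf hS hT).trans c.property.2.2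

lemma plusAut_isGST {A : PAutomaton σ} (hpa : A.IsPA) (hg : A.IsGST) :
    A.plusAut.IsGST := by
  rintro (e | c)
  · exact hg e
  · exact (hpa.2.2.1 c.val.1).2.1

lemma pow_subset_lang {A : PAutomaton σ} (hpa : A.IsPA) :
    ∀ n, powLang A.lang n ⊆ A.plusAut.lang := by
  intro n
  induction n with
  | zero =>
    rintro R ⟨p, r, α, hp, hr, hrec⟩
    exact ⟨p, r, liftPath α, hp, hr, liftRec hrec⟩
  | succ n ih =>
    rintro R ⟨P, hP, Qq, hQq, hg⟩
    obtain ⟨p, r, α, hp, hr, hrecP⟩ := hP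
    obtain ⟨p', z, β, hp', hz, hrecQ⟩ := ih hQq
    obtain ⟨m, -⟩ := id hg
    have hPif := rec_ifaces hpa hrecP
    have hQif := rec_ifaces (plusAut_isPA hpa) hrecQ
    have hdP : Discrete P.tgtIface := Discrete.of_iso hPif.2 (hpa.2.2.1 r).2.1
    have hdQ : Discrete Qq.srcIface := Discrete.of_iso hQif.1 (hpa.2.2.1 p').2.1
    have hmu : Iso (A.mu r) (A.mu p') :=
      (hPif.2.symm.trans (matching_iface_iso m hdP hdQ)).trans hQif.1
    refine ⟨p, z, appendPath α (Path.cons (A := A.plusAut)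
      (Sum.inr ⟨(r, p'), hr, hp', hmu⟩) β), hp, hz, ?_⟩
    exact appendRecAux hrecP
      (Path.cons (A := A.plusAut) (Sum.inr ⟨(r, p'), hr, hp', hmu⟩) β)
      (fun R' hgl => Rec.cons (A := A.plusAut) (Sum.inr ⟨(r, p'), hr, hp', hmu⟩)
        β hrecQ hgl) hg

lemma lang_subset {A : PAutomaton σ} :
    ∀ {p r : A.plusAut.Q} {α : Path A.plusAut p r} {R : PreIpomset σ}, Rec α R → r ∈ A.accept →
    ∃ r', ∃ α' : Path A p r', ∃ P : PreIpomset σ, r' ∈ A.accept ∧ Rec α' P ∧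
      (Iso P R ∨ ∃ Q ∈ plusLang A.lang, GlueRel P Q R) := by
  intro p r α R h
  induction h with
  | nil q' R0 h0 =>
    intro hacc
    exact ⟨q', Path.nil (A := A) q', R0, hacc, Rec.nil (A := A) q' R0 h0,
      Or.inl (Iso.refl R0)⟩
  | cons e rest hrec hge ih =>
    intro hacc
    obtain ⟨r', α', P, hr', hP, hcase⟩ := ih hacc
    rcases e with e0 | c
    · rcases hcase with hiso | ⟨Qq, hQq, hgq⟩
      · exact ⟨r', Path.cons (A := A) e0 α', _, hr',
          Rec.cons e0 α' hP (GlueRel.congr_right hiso hge), Or.inl (Iso.refl _)⟩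
      · obtain ⟨Y, hY1, hY2⟩ := assocB hgq hge
        exact ⟨r', Path.cons (A := A) e0 α', Y, hr', Rec.cons e0 α' hP hY1,
          Or.inr ⟨Qq, hQq, hY2⟩⟩
    · rcases hcase with hiso | ⟨Qq, hQq, hgq⟩
      · refine ⟨c.val.1, Path.nil (A := A) c.val.1, (A.mu c.val.1).idOf, c.property.1,
          Rec.nil (A := A) _ _ (Iso.refl _), Or.inr ⟨_, ?_, hge⟩⟩
        exact Set.mem_iUnion.mpr
          ⟨0, c.val.2, r', α', c.property.2.1, hr', Rec.iso hP hiso⟩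
      · refine ⟨c.val.1, Path.nil (A := A) c.val.1, (A.mu c.val.1).idOf, c.property.1,
          Rec.nil (A := A) _ _ (Iso.refl _), Or.inr ⟨_, ?_, hge⟩⟩
        obtain ⟨n, hn⟩ := Set.mem_iUnion.mp hQq
        exact Set.mem_iUnion.mpr
          ⟨n + 1, P, ⟨c.val.2, r', α', c.property.2.1, hr', hP⟩, Qq, hn, hgq⟩

end PAutomaton

/-- For a reduced gST-automaton `𝒜`, the automaton `𝒜⁺` is a
gST-automaton with `L(𝒜⁺) = L(𝒜)⁺ = ⋃_{n≥1} L(𝒜)ⁿ`. -/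
theorem plus_lang {σ : Type} [Finite σ] (A : PAutomaton σ)
    (hA : A.IsPA) (hgA : A.IsGST) (hrA : A.Reduced) :
    A.plusAut.IsPA ∧ A.plusAut.IsGST ∧
    A.plusAut.lang = plusLang A.lang := by
  refine ⟨PAutomaton.plusAut_isPA hA, PAutomaton.plusAut_isGST hA hgA, ?_⟩
  apply Set.eq_of_subset_of_subset
  · rintro R ⟨p, r, α, hp, hr, hrec⟩
    obtain ⟨r', α', P, hr', hP, hcase⟩ := PAutomaton.lang_subset hrec hr
    rcases hcase with hiso | ⟨Qq, hQq, hgq⟩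
    · exact Set.mem_iUnion.mpr ⟨0, p, r', α', hp, hr', PAutomaton.Rec.iso hP hiso⟩
    · obtain ⟨n, hn⟩ := Set.mem_iUnion.mp hQq
      exact Set.mem_iUnion.mpr ⟨n + 1, P, ⟨p, r', α', hp, hr', hP⟩, Qq, hn, hgq⟩
  · intro R hR
    obtain ⟨n, hn⟩ := Set.mem_iUnion.mp hR
    exact PAutomaton.pow_subset_lang hA n hn

end HDA
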